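/- arXiv:0909.1598 — 3 statements merged into one kernel-verified Lean document; each statement's English description precedes it below -/
import Mathlib

section
/- Let ε > 0, n ≥ 1 an integer, and M > 0. There exists δ > 0 such that: for any finite subset F ⊂ Mₙ(ℂ) with ‖a‖ ≤ M for all a ∈ F and any unitary u ∈ Mₙ(ℂ) satisfying ‖ua − au‖ < δ for all a ∈ F, there exists a continuous path of unitaries {u(t) : t ∈ [0,1]} in Mₙ(ℂ) with u(0) = u, u(1) = 1, and ‖u(t)a − au(t)‖ < ε for all a ∈ F and all t ∈ [0,1]. -/
open scoped Matrix.Norms.L2Operator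

noncomputable instance matrixCStarAlgebra (n : ℕ) :
    CStarAlgebra (Matrix (Fin n) (Fin n) ℂ) := {}

namespace AlmostCommutingPath

variable {A : Type*} [CStarAlgebra A]

lemma norm_comm_star (x a : A) :
    ‖star x * a - a * star x‖ = ‖x * star a - star a * x‖ := by
  have h2 : star x * a - a * star x = -(star (x * star a - star a * x)) := by
    simp only [star_sub, star_mul, star_star, neg_sub]
  rw [h2, norm_neg, norm_star]

lemma comm_bound_of_mem_adjoin (v : A) {w : A} (hw : w ∈ StarAlgebra.adjoin ℂ {v}) :
    ∃ C : ℝ, 0 ≤ C ∧ ∀ a : A,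
      ‖w * a - a * w‖ ≤ C * (‖v * a - a * v‖ + ‖star v * a - a * star v‖) := by
  induction hw using StarAlgebra.adjoin_induction with
  | mem x hx =>
    obtain rfl : x = v := hx
    refine ⟨1, zero_le_one, fun a => ?_⟩
    have h1 := norm_nonneg (star x * a - a * star x)
    linarith
  | algebraMap r =>
    refine ⟨0, le_rfl, fun a => ?_⟩
    have : (algebraMap ℂ A r) * a - a * (algebraMap ℂ A r) = 0 := by
      rw [Algebra.commutes, sub_self]
    simp [this]
  | add x y hx hy ihx ihy =>
    obtain ⟨C1, hC1, h1⟩ := ihx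
    obtain ⟨C2, hC2, h2⟩ := ihy
    refine ⟨C1 + C2, by positivity, fun a => ?_⟩
    have key : (x + y) * a - a * (x + y) = (x * a - a * x) + (y * a - a * y) := by
      noncomm_ring
    calc ‖(x + y) * a - a * (x + y)‖ ≤ ‖x * a - a * x‖ + ‖y * a - a * y‖ := by
          rw [key]; exact norm_add_le _ _
      _ ≤ (C1 + C2) * (‖v * a - a * v‖ + ‖star v * a - a * star v‖) := by
          have := h1 a; have := h2 a; linarith
  | mul x y hx hy ihx ihy =>
    obtain ⟨C1, hC1, h1⟩ := ihx
    obtain ⟨C2, hC2, h2⟩ := ihy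
    refine ⟨‖x‖ * C2 + C1 * ‖y‖, by positivity, fun a => ?_⟩
    have key : x * y * a - a * (x * y) = x * (y * a - a * y) + (x * a - a * x) * y := by
      noncomm_ring
    have hD : 0 ≤ ‖v * a - a * v‖ + ‖star v * a - a * star v‖ := by positivity
    calc ‖x * y * a - a * (x * y)‖
        ≤ ‖x * (y * a - a * y)‖ + ‖(x * a - a * x) * y‖ := by
          rw [key]; exact norm_add_le _ _
      _ ≤ ‖x‖ * ‖y * a - a * y‖ + ‖x * a - a * x‖ * ‖y‖ := by
          gcongr <;> [exact norm_mul_le _ _; exact norm_mul_le _ _]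
      _ ≤ (‖x‖ * C2 + C1 * ‖y‖) * (‖v * a - a * v‖ + ‖star v * a - a * star v‖) := by
          have hx1 := h1 a
          have hx2 := h2 a
          have hnx := norm_nonneg x
          have hny := norm_nonneg y
          nlinarith [mul_le_mul_of_nonneg_left hx2 hnx, mul_le_mul_of_nonneg_right hx1 hny]
  | star x hx ihx =>
    obtain ⟨C, hC, h⟩ := ihx
    refine ⟨C, hC, fun a => ?_⟩
    have h1 : ‖v * star a - star a * v‖ = ‖star v * a - a * star v‖ :=
      (norm_comm_star v a).symm
    have h2 : ‖star v * star a - star a * star v‖ = ‖v * a - a * v‖ := by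
      have := norm_comm_star (star v) a
      rw [star_star] at this
      exact this.symm
    calc ‖star x * a - a * star x‖ = ‖x * star a - star a * x‖ := norm_comm_star x a
      _ ≤ C * (‖v * star a - star a * v‖ + ‖star v * star a - star a * star v‖) := h (star a)
      _ = C * (‖v * a - a * v‖ + ‖star v * a - a * star v‖) := by rw [h1, h2]; ring

lemma cfcHom_mem_closure_adjoin (a : A) (ha : IsStarNormal a) (f : C(spectrum ℂ a, ℂ)) :
    cfcHom ha f ∈ (StarAlgebra.adjoin ℂ {a}).topologicalClosure := by
  set S := (StarAlgebra.adjoin ℂ {a}).topologicalClosure with hS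
  have hX : ((Polynomial.toContinuousMapOnAlgHom (spectrum ℂ a)) Polynomial.X) =
      (ContinuousMap.id ℂ).restrict (spectrum ℂ a) := by
    ext z; simp
  have hmem : cfcHom ha ((Polynomial.toContinuousMapOnAlgHom (spectrum ℂ a)) Polynomial.X) ∈ S := by
    rw [hX, cfcHom_id ha]
    exact StarSubalgebra.le_topologicalClosure _ (StarAlgebra.self_mem_adjoin_singleton ℂ a)
  have hT : StarAlgebra.adjoin ℂ
      {((Polynomial.toContinuousMapOnAlgHom (spectrum ℂ a)) Polynomial.X)}
      ≤ S.comap (cfcHom ha) := by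
    apply StarAlgebra.adjoin_le
    intro x hx
    obtain rfl : x = _ := hx
    exact hmem
  have hclosed : IsClosed ((S.comap (cfcHom ha)) : Set C(spectrum ℂ a, ℂ)) := by
    have : ((S.comap (cfcHom ha)) : Set C(spectrum ℂ a, ℂ)) = (cfcHom ha) ⁻¹' (S : Set A) := rfl
    rw [this]
    exact (StarSubalgebra.isClosed_topologicalClosure _).preimage (cfcHom_continuous ha)
  have htop : (⊤ : StarSubalgebra ℂ C(spectrum ℂ a, ℂ)) ≤ S.comap (cfcHom ha) := by
    rw [← polynomialFunctions.starClosure_topologicalClosure (spectrum ℂ a),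
        polynomialFunctions.starClosure_eq_adjoin_X]
    exact StarSubalgebra.topologicalClosure_minimal hT hclosed
  exact htop (by trivial)

lemma cfc_mem_closure_adjoin (a : A) (ha : IsStarNormal a) (f : ℂ → ℂ)
    (hf : ContinuousOn f (spectrum ℂ a)) :
    cfc f a ∈ closure ((StarAlgebra.adjoin ℂ {a} : StarSubalgebra ℂ A) : Set A) := by
  rw [cfc_apply f a ha hf]
  exact cfcHom_mem_closure_adjoin a ha _

lemma continuous_cfc_param (a : A) (ha : IsStarNormal a) (g : ℝ → ℂ → ℂ)
    (hg : Continuous fun p : ℝ × spectrum ℂ a => g p.1 p.2) :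
    Continuous fun t => cfc (g t) a := by
  have hco : ∀ t, ContinuousOn (g t) (spectrum ℂ a) := by
    intro t
    rw [continuousOn_iff_continuous_restrict]
    exact hg.comp (continuous_const.prodMk continuous_id)
  have heq : (fun t => cfc (g t) a)
      = fun t => cfcHom ha ((ContinuousMap.mk _ hg).curry t) := by
    funext t
    rw [cfc_apply (g t) a ha (hco t)]
    exact congrArg _ (ContinuousMap.ext fun z => rfl)
  rw [heq]
  exact (cfcHom_continuous ha).comp (ContinuousMap.mk _ hg).curry.continuous

lemma cfc_mem_unitary (a : A) (ha : IsStarNormal a) (f : ℂ → ℂ)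
    (hf : ContinuousOn f (spectrum ℂ a)) (h1 : ∀ z ∈ spectrum ℂ a, ‖f z‖ = 1) :
    cfc f a ∈ unitary A := by
  have key : ∀ z ∈ spectrum ℂ a, star (f z) * f z = 1 := by
    intro z hz
    rw [RCLike.star_def, RCLike.conj_mul]
    rw [h1 z hz]
    norm_num
  rw [Unitary.mem_iff]
  constructor
  · rw [← cfc_star f a, ← cfc_mul _ _ a (hf.star) hf]
    rw [show (1 : A) = algebraMap ℂ A 1 by simp, ← cfc_const (1 : ℂ) a ha]
    exact cfc_congr fun z hz => key z hz
  · rw [← cfc_star f a, ← cfc_mul _ _ a hf (hf.star)]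
    rw [show (1 : A) = algebraMap ℂ A 1 by simp, ← cfc_const (1 : ℂ) a ha]
    exact cfc_congr fun z hz => by rw [mul_comm]; exact key z hz

lemma comm_perturb (w w' a : A) :
    ‖w * a - a * w‖ ≤ ‖w' * a - a * w'‖ + 2 * ‖w - w'‖ * ‖a‖ := by
  have key : w * a - a * w = (w' * a - a * w') + ((w - w') * a - a * (w - w')) := by
    noncomm_ring
  calc ‖w * a - a * w‖ ≤ ‖w' * a - a * w'‖ + ‖(w - w') * a - a * (w - w')‖ := by
        rw [key]; exact norm_add_le _ _
    _ ≤ ‖w' * a - a * w'‖ + 2 * ‖w - w'‖ * ‖a‖ := by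
        have h1 : ‖(w - w') * a - a * (w - w')‖ ≤ ‖(w - w') * a‖ + ‖a * (w - w')‖ :=
          norm_sub_le _ _
        have h2 : ‖(w - w') * a‖ ≤ ‖w - w'‖ * ‖a‖ := norm_mul_le _ _
        have h3 : ‖a * (w - w')‖ ≤ ‖a‖ * ‖w - w'‖ := norm_mul_le _ _
        nlinarith [norm_nonneg (w - w'), norm_nonneg a]

lemma comm_star_unitary [Nontrivial A] {v : A} (hv : v ∈ unitary A) (a : A) :
    ‖star v * a - a * star v‖ ≤ ‖v * a - a * v‖ := by
  obtain ⟨h1, h2⟩ := Unitary.mem_iff.mp hv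
  have key : star v * a - a * star v = star v * (a * v - v * a) * star v := by
    have : star v * (a * v - v * a) * star v
        = star v * a * (v * star v) - (star v * v) * a * star v := by noncomm_ring
    rw [this, h1, h2]
    noncomm_ring
  have hnv : ‖star v‖ = 1 := by
    rw [norm_star]
    exact CStarRing.norm_coe_unitary ⟨v, hv⟩
  rw [key]
  calc ‖star v * (a * v - v * a) * star v‖ ≤ ‖star v * (a * v - v * a)‖ * ‖star v‖ :=
        norm_mul_le _ _
    _ ≤ ‖star v‖ * ‖a * v - v * a‖ * ‖star v‖ := by
        gcongr; exact norm_mul_le _ _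
    _ = ‖v * a - a * v‖ := by
        rw [hnv, one_mul, mul_one, ← norm_neg]
        congr 1
        noncomm_ring

lemma compact_uniform {X : Type*} [PseudoMetricSpace X] {K : Set X} (hK : IsCompact K)
    (C : ℝ → X → Prop) (mono : ∀ {δ₁ δ₂ : ℝ} {w : X}, δ₁ ≤ δ₂ → C δ₂ w → C δ₁ w)
    (h : ∀ w ∈ K, ∃ δ > 0, ∃ η > 0, ∀ w', dist w' w < η → C δ w') :
    ∃ δ > 0, ∀ w ∈ K, C δ w := by
  choose! δ hδ η hη hC using h
  obtain ⟨t, ht⟩ := hK.elim_finite_subcover (fun w : K => Metric.ball (w : X) (η w))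
    (fun w => Metric.isOpen_ball) (fun x hx => Set.mem_iUnion.mpr ⟨⟨x, hx⟩,
      Metric.mem_ball_self (hη x hx)⟩)
  by_cases htne : t.Nonempty
  · refine ⟨t.inf' htne (fun i => δ (i : X)), ?_, ?_⟩
    · simp only [gt_iff_lt, Finset.lt_inf'_iff]
      exact fun i _ => hδ i i.2
    · intro w hw
      obtain ⟨i, hit, hiw⟩ : ∃ i ∈ t, w ∈ Metric.ball (i : X) (η i) := by
        simpa using ht hw
      exact mono (Finset.inf'_le _ hit) (hC i i.2 w hiw)
  · refine ⟨1, one_pos, fun w hw => ?_⟩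
    exfalso
    obtain ⟨i, hit, _⟩ : ∃ i ∈ t, w ∈ Metric.ball (i : X) (η i) := by simpa using ht hw
    exact htne ⟨i, hit⟩

end AlmostCommutingPath
lemma AlmostCommutingPath.arg_le {z : ℂ} (h1 : ‖z‖ = 1)
    (h2 : ‖z - 1‖ ≤ 1/2) :
    |Complex.arg z| ≤ Real.pi/2 * ‖z - 1‖ := by
  have hπ := Real.pi_pos
  have hre : (0:ℝ) ≤ z.re := by
    have e1 : Complex.normSq (z - 1) ≤ 1/4 := by
      rw [← Complex.sq_norm]
      nlinarith [norm_nonneg (z - 1)]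
    have e2 : Complex.normSq z = 1 := by rw [← Complex.sq_norm, h1]; norm_num
    simp only [Complex.normSq_apply, Complex.sub_re, Complex.sub_im, Complex.one_re,
      Complex.one_im] at e1 e2
    nlinarith
  have hhalf : |Complex.arg z| ≤ Real.pi/2 := Complex.abs_arg_le_pi_div_two_iff.mpr hre
  have hsin : Real.sin (Complex.arg z) = z.im := by rw [Complex.sin_arg, h1, div_one]
  have him : |z.im| ≤ ‖z - 1‖ := by
    have := Complex.abs_im_le_norm (z - 1)
    simpa [Complex.sub_im] using this
  have hJ : 2/Real.pi * |Complex.arg z| ≤ |Real.sin (Complex.arg z)| := by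
    rcases le_or_gt 0 (Complex.arg z) with hpos | hneg
    · rw [_root_.abs_of_nonneg hpos]
      exact (Real.mul_le_sin hpos (by rwa [_root_.abs_of_nonneg hpos] at hhalf)).trans
        (le_abs_self _)
    · rw [abs_of_neg hneg]
      have h' : 2/Real.pi * (-Complex.arg z) ≤ Real.sin (-Complex.arg z) :=
        Real.mul_le_sin (by linarith) (by rw [abs_of_neg hneg] at hhalf; linarith)
      rw [Real.sin_neg] at h'
      exact h'.trans (neg_le_abs _)
  rw [hsin] at hJ
  have h3 : 2/Real.pi * |Complex.arg z| ≤ ‖z - 1‖ := hJ.trans him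
  have h4 := mul_le_mul_of_nonneg_left h3 (le_of_lt (by positivity : (0:ℝ) < Real.pi/2))
  calc |Complex.arg z| = Real.pi/2 * (2/Real.pi * |Complex.arg z|) := by field_simp
    _ ≤ Real.pi/2 * ‖z - 1‖ := h4

lemma AlmostCommutingPath.abs_exp_mul_I_sub_one {θ : ℝ} (h : |θ| ≤ 1) :
    ‖Complex.exp ((θ:ℂ) * Complex.I) - 1‖ ≤ 2 * |θ| := by
  have habs : ‖(θ:ℂ) * Complex.I‖ = |θ| := by
    simp
  have := Complex.norm_exp_sub_one_le (x := (θ:ℂ) * Complex.I) (by rw [habs]; exact h)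
  rwa [habs] at this

lemma AlmostCommutingPath.exp_arg_mul_I {z : ℂ} (h : ‖z‖ = 1) :
    Complex.exp ((Complex.arg z : ℂ) * Complex.I) = z := by
  have h2 := Complex.norm_mul_exp_arg_mul_I z
  rw [h] at h2
  simpa using h2

namespace AlmostCommutingPath

/-- The function used to define paths of unitaries via functional calculus. -/
noncomputable def pfun (b0 : ℝ) (bb : ℂ) (t : ℝ) (z : ℂ) : ℂ :=
  Complex.exp ((((1 - t) * (b0 + Complex.arg (bb * z)) : ℝ) : ℂ) * Complex.I)

lemma pfun_norm_one (b0 : ℝ) (bb : ℂ) (t : ℝ) (z : ℂ) : ‖pfun b0 bb t z‖ = 1 := by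
  rw [pfun]
  exact Complex.norm_exp_ofReal_mul_I _

lemma pfun_one (b0 : ℝ) (bb : ℂ) (z : ℂ) : pfun b0 bb 1 z = 1 := by
  rw [pfun]
  norm_num

variable {A : Type*} [CStarAlgebra A] [Nontrivial A]

lemma norm_one_of_unitary {v : A} (hv : v ∈ unitary A) : ‖v‖ = 1 :=
  CStarRing.norm_coe_unitary ⟨v, hv⟩

omit [Nontrivial A] in
lemma isStarNormal_of_unitary {v : A} (hv : v ∈ unitary A) : IsStarNormal v := by
  obtain ⟨h1, h2⟩ := Unitary.mem_iff.mp hv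
  exact ⟨by rw [Commute, SemiconjBy, h1, h2]⟩

omit [Nontrivial A] in
lemma spectrum_abs_one {v : A} (hv : v ∈ unitary A) {z : ℂ} (hz : z ∈ spectrum ℂ v) :
    ‖z‖ = 1 := by
  have := spectrum.subset_circle_of_unitary hv hz
  rw [Metric.mem_sphere, dist_zero_right] at this
  exact this

omit [Nontrivial A] in
lemma pfun_contOn (b0 : ℝ) (bb : ℂ) {v : A}
    (hslit : ∀ z ∈ spectrum ℂ v, bb * z ∈ Complex.slitPlane) :
    Continuous fun p : ℝ × spectrum ℂ v => pfun b0 bb p.1 (p.2 : ℂ) := by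
  have hFFcont : Continuous fun z : spectrum ℂ v => Complex.arg (bb * (z:ℂ)) := by
    rw [continuous_iff_continuousAt]
    intro z
    exact ContinuousAt.comp (x := z) (Complex.continuousAt_arg (hslit _ z.2))
      ((continuous_const.mul continuous_subtype_val).continuousAt)
  unfold pfun
  apply Complex.continuous_exp.comp
  apply Continuous.mul _ continuous_const
  apply Complex.continuous_ofReal.comp
  exact (continuous_const.sub continuous_fst).mul
    ((continuous_const.add hFFcont).comp continuous_snd)

omit [Nontrivial A] in
lemma pfun_spectrum_contOn (b0 : ℝ) (bb : ℂ) {v : A}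
    (hslit : ∀ z ∈ spectrum ℂ v, bb * z ∈ Complex.slitPlane) (t : ℝ) :
    ContinuousOn (pfun b0 bb t) (spectrum ℂ v) := by
  rw [continuousOn_iff_continuous_restrict]
  have h2 : Continuous (fun z : spectrum ℂ v => ((t, z) : ℝ × spectrum ℂ v)) :=
    continuous_const.prodMk continuous_id
  have h3 := (pfun_contOn b0 bb hslit).comp h2
  exact h3

/-- The commutator bound coming from membership in the closure of the star subalgebra
generated by `v`, in a uniform form near a point. -/
lemma pointwise_comm_bound {v : A} (hv : v ∈ unitary A) (M ε2 : ℝ) (hM : 0 < M)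
    (hε2 : 0 < ε2) {w : A}
    (hw : w ∈ closure ((StarAlgebra.adjoin ℂ {v} : StarSubalgebra ℂ A) : Set A)) :
    ∃ δ > 0, ∃ η > 0, ∀ w', dist w' w < η → ∀ a : A, ‖a‖ ≤ M →
      ‖v * a - a * v‖ < δ → ‖w' * a - a * w'‖ < ε2 := by
  obtain ⟨w', hw'S, hw'near⟩ := Metric.mem_closure_iff.mp hw (ε2/(10*(M+1)))
    (by positivity)
  obtain ⟨C, hC, hCb⟩ := comm_bound_of_mem_adjoin v hw'S
  refine ⟨ε2/(10*(C+1)), by positivity, ε2/(10*(M+1)), by positivity, ?_⟩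
  intro w'' hdist a haM hva
  have hstar : ‖star v * a - a * star v‖ ≤ ‖v * a - a * v‖ := comm_star_unitary hv a
  have h1 : ‖w' * a - a * w'‖ ≤ C * (‖v * a - a * v‖ + ‖star v * a - a * star v‖) := hCb a
  have h2 : ‖w'' * a - a * w''‖ ≤ ‖w' * a - a * w'‖ + 2 * ‖w'' - w'‖ * ‖a‖ :=
    comm_perturb w'' w' a
  have h3 : ‖w'' - w'‖ ≤ dist w'' w + dist w w' := by
    rw [← dist_eq_norm]
    exact dist_triangle _ _ _
  have hCv : C * (‖v * a - a * v‖ + ‖star v * a - a * star v‖) ≤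
      C * (2 * (ε2/(10*(C+1)))) := by
    apply mul_le_mul_of_nonneg_left _ hC
    nlinarith
  have hC5 : C * (2 * (ε2/(10*(C+1)))) ≤ ε2/5 := by
    have hfrac : C / (C+1) ≤ 1 := by
      rw [div_le_one (by positivity)]; linarith
    have heq : C * (2 * (ε2/(10*(C+1)))) = (C/(C+1)) * (ε2/5) := by
      field_simp; ring
    rw [heq]
    nlinarith [mul_le_mul_of_nonneg_right hfrac (le_of_lt (by positivity : (0:ℝ) < ε2/5))]
  have hnorm2 : 2 * ‖w'' - w'‖ * ‖a‖ ≤ 2 * (2 * (ε2/(10*(M+1)))) * M := by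
    have hb : ‖w'' - w'‖ ≤ 2 * (ε2/(10*(M+1))) := by linarith
    have := norm_nonneg (w'' - w')
    have := norm_nonneg a
    nlinarith
  have hM5 : 2 * (2 * (ε2/(10*(M+1)))) * M ≤ 2 * (ε2/5) := by
    have hfrac : M / (M+1) ≤ 1 := by
      rw [div_le_one (by positivity)]; linarith
    have heq : 2 * (2 * (ε2/(10*(M+1)))) * M = (M/(M+1)) * (2 * (ε2/5)) := by
      field_simp; ring
    rw [heq]
    nlinarith [mul_le_mul_of_nonneg_right hfrac
      (le_of_lt (by positivity : (0:ℝ) < 2 * (ε2/5)))]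
  linarith

/-- The main path from a unitary with non-full spectrum to `1`, with commutator control. -/
lemma main_path {v : A} (hv : v ∈ unitary A) (hsp : Set.Finite (spectrum ℂ v))
    (ε2 M : ℝ) (hε2 : 0 < ε2) (hM : 0 < M) :
    ∃ δ' > 0, ∃ V : ℝ → A, Continuous V ∧ (∀ t, V t ∈ unitary A) ∧ V 0 = v ∧ V 1 = 1 ∧
      ∀ t ∈ Set.Icc (0:ℝ) 1, ∀ a : A, ‖a‖ ≤ M → ‖v * a - a * v‖ < δ' →
        ‖V t * a - a * V t‖ < ε2 := by
  haveI hN : IsStarNormal v := isStarNormal_of_unitary hv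
  obtain ⟨c, hc1, hc2⟩ : ∃ c : ℂ, ‖c‖ = 1 ∧ c ∉ spectrum ℂ v := by
    have hπ := Real.pi_pos
    have hinj : Set.InjOn (fun θ : ℝ => Complex.exp ((θ:ℂ) * Complex.I))
        (Set.Ioc (-Real.pi) Real.pi) := by
      intro x hx y hy hxy
      have hax : Complex.arg (Complex.exp ((x:ℂ) * Complex.I)) = x := by
        rw [Complex.arg_exp_mul_I, toIocMod_eq_self]
        simpa [two_mul] using hx
      have hay : Complex.arg (Complex.exp ((y:ℂ) * Complex.I)) = y := by
        rw [Complex.arg_exp_mul_I, toIocMod_eq_self]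
        simpa [two_mul] using hy
      have := congrArg Complex.arg hxy
      simpa [hax, hay] using this
    have hIm : ((fun θ : ℝ => Complex.exp ((θ:ℂ) * Complex.I)) ''
        Set.Ioc (-Real.pi) Real.pi).Infinite :=
      (Set.Ioc_infinite (by linarith)).image hinj
    obtain ⟨c, hcmem, hcns⟩ := (hIm.diff hsp).nonempty
    refine ⟨c, ?_, hcns⟩
    obtain ⟨θ, _, rfl⟩ := hcmem
    exact Complex.norm_exp_ofReal_mul_I θ
  have habsb : ‖-((starRingEnd ℂ) c)‖ = 1 := by
    rw [norm_neg, Complex.norm_conj, hc1]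
  have hcc : ((starRingEnd ℂ) c) * c = 1 := by
    rw [mul_comm, Complex.mul_conj, Complex.normSq_eq_norm_sq, hc1]
    norm_num
  have hslit : ∀ z ∈ spectrum ℂ v, -((starRingEnd ℂ) c) * z ∈ Complex.slitPlane := by
    intro z hz
    rw [Complex.mem_slitPlane_iff]
    by_contra hcon
    push_neg at hcon
    obtain ⟨hre, him⟩ := hcon
    have habs : ‖-((starRingEnd ℂ) c) * z‖ = 1 := by
      rw [norm_mul, habsb, spectrum_abs_one hv hz, mul_one]
    have hre1 : (-((starRingEnd ℂ) c) * z).re = -1 := by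
      have hsq := Complex.sq_norm (-((starRingEnd ℂ) c) * z)
      rw [habs] at hsq
      simp only [Complex.normSq_apply, him] at hsq
      nlinarith
    have hbz : -((starRingEnd ℂ) c) * z = -1 := by
      apply Complex.ext
      · simpa using hre1
      · simpa using him
    have hzc : z = c := by
      have hcne : (starRingEnd ℂ) c ≠ 0 := by
        intro h0
        rw [← Complex.norm_conj, h0] at hc1
        simp at hc1
      have h6 : ((starRingEnd ℂ) c) * z = 1 := by linear_combination -hbz
      exact mul_left_cancel₀ hcne (h6.trans hcc.symm)
    exact hc2 (hzc ▸ hz)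
  have hFFid : ∀ z ∈ spectrum ℂ v,
      pfun (Complex.arg (-c)) (-((starRingEnd ℂ) c)) 0 z = z := by
    intro z hz
    have habsz := spectrum_abs_one hv hz
    have habsbz : ‖-((starRingEnd ℂ) c) * z‖ = 1 := by
      rw [norm_mul, habsb, habsz, mul_one]
    have h1 : Complex.exp ((Complex.arg (-c) : ℂ) * Complex.I) = -c :=
      exp_arg_mul_I (by rw [norm_neg, hc1])
    have h2 : Complex.exp ((Complex.arg (-((starRingEnd ℂ) c) * z) : ℂ) * Complex.I)
        = -((starRingEnd ℂ) c) * z := exp_arg_mul_I habsbz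
    rw [pfun]
    push_cast
    rw [sub_zero, one_mul, add_mul, Complex.exp_add, h1, h2]
    linear_combination (z * hcc)
  set V : ℝ → A := fun t => cfc (pfun (Complex.arg (-c)) (-((starRingEnd ℂ) c)) t) v
    with hVdef
  have hgco := pfun_spectrum_contOn (Complex.arg (-c)) (-((starRingEnd ℂ) c)) hslit
  have hVcont : Continuous V :=
    continuous_cfc_param v hN _ (pfun_contOn _ _ hslit)
  have hVunit : ∀ t, V t ∈ unitary A := fun t =>
    cfc_mem_unitary v hN _ (hgco t) (fun z _ => pfun_norm_one _ _ t z)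
  have hV0 : V 0 = v := by
    show cfc (pfun (Complex.arg (-c)) (-((starRingEnd ℂ) c)) 0) v = v
    have heq : cfc (pfun (Complex.arg (-c)) (-((starRingEnd ℂ) c)) 0) v
        = cfc (id : ℂ → ℂ) v := cfc_congr (fun z hz => hFFid z hz)
    rw [heq, cfc_id ℂ v]
  have hV1 : V 1 = 1 := by
    show cfc (pfun (Complex.arg (-c)) (-((starRingEnd ℂ) c)) 1) v = 1
    have heq : cfc (pfun (Complex.arg (-c)) (-((starRingEnd ℂ) c)) 1) v
        = cfc (fun _ : ℂ => (1:ℂ)) v := cfc_congr (fun z _ => pfun_one _ _ z)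
    rw [heq, cfc_const (1:ℂ) v hN, map_one]
  have hVmem : ∀ t, V t ∈ closure ((StarAlgebra.adjoin ℂ {v} : StarSubalgebra ℂ A) : Set A) :=
    fun t => cfc_mem_closure_adjoin v hN _ (hgco t)
  have hKco : IsCompact (V '' Set.Icc (0:ℝ) 1) := isCompact_Icc.image hVcont
  obtain ⟨δ', hδ'pos, hδ'⟩ := compact_uniform hKco
    (fun δ w => ∀ a : A, ‖a‖ ≤ M → ‖v * a - a * v‖ < δ → ‖w * a - a * w‖ < ε2)
    (fun hle h a haM hva => h a haM (lt_of_lt_of_le hva hle))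
    (by
      rintro w ⟨t, ht, rfl⟩
      exact pointwise_comm_bound hv M ε2 hM hε2 (hVmem t))
  exact ⟨δ', hδ'pos, V, hVcont, hVunit, hV0, hV1,
    fun t ht a haM hva => hδ' (V t) ⟨t, ht, rfl⟩ a haM hva⟩

end AlmostCommutingPath
namespace AlmostCommutingPath

variable {A : Type*} [CStarAlgebra A] [Nontrivial A]

open Pointwise

/-- The bridge path from `u` to a nearby unitary `v`. -/
lemma bridge_path {v u : A} (hv : v ∈ unitary A) (hu : u ∈ unitary A)
    (hclose : ‖u - v‖ ≤ 1/2) :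
    ∃ B : ℝ → A, Continuous B ∧ (∀ s, B s ∈ unitary A) ∧ B 0 = u ∧ B 1 = v ∧
      ∀ s ∈ Set.Icc (0:ℝ) 1, ∀ a : A,
        ‖B s * a - a * B s‖ ≤ ‖v * a - a * v‖ + 7 * ‖u - v‖ * ‖a‖ := by
  have hπ := Real.pi_pos
  obtain ⟨hv1, hv2⟩ := Unitary.mem_iff.mp hv
  have hwu : star v * u ∈ unitary A := mul_mem (Unitary.star_mem hv) hu
  set w : A := star v * u with hwdef
  haveI hNw : IsStarNormal w := isStarNormal_of_unitary hwu
  have hw1 : ‖w - 1‖ ≤ ‖u - v‖ := by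
    have hrw : w - 1 = star v * (u - v) := by rw [hwdef, mul_sub, hv1]
    rw [hrw]
    calc ‖star v * (u - v)‖ ≤ ‖star v‖ * ‖u - v‖ := norm_mul_le _ _
      _ = ‖u - v‖ := by rw [norm_star, norm_one_of_unitary hv, one_mul]
  have hspec : ∀ z ∈ spectrum ℂ w, ‖z‖ = 1 ∧ ‖z - 1‖ ≤ ‖u - v‖ := by
    intro z hz
    refine ⟨spectrum_abs_one hwu hz, ?_⟩
    have hset := spectrum.sub_singleton_eq w (1:ℂ)
    have hmem : z - 1 ∈ spectrum ℂ w - {(1:ℂ)} := Set.sub_mem_sub hz rfl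
    rw [hset] at hmem
    have hone : (algebraMap ℂ A (1:ℂ)) = 1 := map_one _
    rw [hone] at hmem
    have := spectrum.norm_le_norm_of_mem hmem
    linarith
  have hspec2 : ∀ z ∈ spectrum ℂ w, |Complex.arg z| ≤ Real.pi/2 * ‖u - v‖ ∧
      |Complex.arg z| ≤ 1 := by
    intro z hz
    obtain ⟨h1, h2⟩ := hspec z hz
    have harg := arg_le h1 (h2.trans hclose)
    constructor
    · exact harg.trans (by nlinarith)
    · have hpi4 := Real.pi_le_four
      nlinarith [norm_nonneg (z - 1), h2.trans hclose]
  have hslit : ∀ z ∈ spectrum ℂ w, (1:ℂ) * z ∈ Complex.slitPlane := by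
    intro z hz
    obtain ⟨h1, h2⟩ := hspec z hz
    rw [one_mul, Complex.mem_slitPlane_iff]
    left
    have e1 : Complex.normSq (z - 1) ≤ 1/4 := by
      rw [← Complex.sq_norm]
      nlinarith [norm_nonneg (z - 1), h2.trans hclose]
    have e2 : Complex.normSq z = 1 := by rw [← Complex.sq_norm, h1]; norm_num
    simp only [Complex.normSq_apply, Complex.sub_re, Complex.sub_im, Complex.one_re,
      Complex.one_im] at e1 e2
    nlinarith
  have hgco := pfun_spectrum_contOn 0 1 hslit
  set Bc : ℝ → A := fun s => cfc (pfun 0 1 s) w with hBcdef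
  have hBccont : Continuous Bc := continuous_cfc_param w hNw _ (pfun_contOn _ _ hslit)
  have hBcunit : ∀ s, Bc s ∈ unitary A := fun s =>
    cfc_mem_unitary w hNw _ (hgco s) (fun z _ => pfun_norm_one _ _ s z)
  have hBc0 : Bc 0 = w := by
    show cfc (pfun 0 1 0) w = w
    have heq : cfc (pfun 0 1 0) w = cfc (id : ℂ → ℂ) w := by
      apply cfc_congr
      intro z hz
      rw [pfun]
      push_cast
      rw [sub_zero, one_mul, one_mul, zero_add]
      exact exp_arg_mul_I (hspec z hz).1
    rw [heq, cfc_id ℂ w]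
  have hBc1 : Bc 1 = 1 := by
    show cfc (pfun 0 1 1) w = 1
    have heq : cfc (pfun 0 1 1) w = cfc (fun _ : ℂ => (1:ℂ)) w :=
      cfc_congr (fun z _ => pfun_one _ _ z)
    rw [heq, cfc_const (1:ℂ) w hNw, map_one]
  have hBcnear : ∀ s ∈ Set.Icc (0:ℝ) 1, ‖Bc s - 1‖ ≤ Real.pi * ‖u - v‖ := by
    intro s hs
    have hc1 : (0:ℝ) ≤ Real.pi * ‖u - v‖ := by positivity
    have hsub : Bc s - 1 = cfc (fun z => pfun 0 1 s z - 1) w := by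
      show cfc (pfun 0 1 s) w - 1 = _
      rw [cfc_sub (pfun 0 1 s) (fun _ => (1:ℂ)) w (hgco s) continuousOn_const]
      rw [cfc_const (1:ℂ) w hNw, map_one]
    rw [hsub]
    apply norm_cfc_le hc1
    intro z hz
    obtain ⟨ha1, ha2⟩ := hspec2 z hz
    have hθ : |(1 - s) * (0 + Complex.arg ((1:ℂ) * z))| ≤ |Complex.arg z| := by
      rw [one_mul, zero_add, abs_mul]
      have h1s : |1 - s| ≤ 1 := by
        rw [abs_le]
        constructor <;> [linarith [hs.2]; linarith [hs.1]]
      nlinarith [abs_nonneg (Complex.arg z)]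
    have hexp := abs_exp_mul_I_sub_one (θ := (1 - s) * (0 + Complex.arg ((1:ℂ) * z)))
      (hθ.trans ha2)
    rw [pfun]
    calc ‖Complex.exp ((((1 - s) * (0 + Complex.arg ((1:ℂ) * z)) : ℝ) : ℂ)
          * Complex.I) - 1‖ ≤ 2 * |(1 - s) * (0 + Complex.arg ((1:ℂ) * z))| := hexp
      _ ≤ 2 * |Complex.arg z| := by linarith
      _ ≤ Real.pi * ‖u - v‖ := by nlinarith
  refine ⟨fun s => v * Bc s, continuous_const.mul hBccont, fun s => mul_mem hv (hBcunit s),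
    ?_, ?_, ?_⟩
  · show v * Bc 0 = u
    rw [hBc0, hwdef, ← mul_assoc, hv2, one_mul]
  · show v * Bc 1 = v
    rw [hBc1, mul_one]
  · intro s hs a
    have hkey : v * Bc s * a - a * (v * Bc s)
        = v * (Bc s * a - a * Bc s) + (v * a - a * v) * Bc s := by noncomm_ring
    have h1 : ‖v * (Bc s * a - a * Bc s)‖ ≤ ‖Bc s * a - a * Bc s‖ := by
      calc ‖v * (Bc s * a - a * Bc s)‖ ≤ ‖v‖ * ‖Bc s * a - a * Bc s‖ := norm_mul_le _ _
        _ = ‖Bc s * a - a * Bc s‖ := by rw [norm_one_of_unitary hv, one_mul]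
    have h2 : ‖(v * a - a * v) * Bc s‖ ≤ ‖v * a - a * v‖ := by
      calc ‖(v * a - a * v) * Bc s‖ ≤ ‖v * a - a * v‖ * ‖Bc s‖ := norm_mul_le _ _
        _ = ‖v * a - a * v‖ := by rw [norm_one_of_unitary (hBcunit s), mul_one]
    have h3 : ‖Bc s * a - a * Bc s‖ ≤ 2 * ‖Bc s - 1‖ * ‖a‖ := by
      have := comm_perturb (Bc s) 1 a
      simpa using this
    have h4 : 2 * ‖Bc s - 1‖ * ‖a‖ ≤ 7 * ‖u - v‖ * ‖a‖ := by
      have h5 := hBcnear s hs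
      have h6 : Real.pi < 3.15 := Real.pi_lt_d2
      have h7 : 2 * ‖Bc s - 1‖ ≤ 7 * ‖u - v‖ := by
        nlinarith [norm_nonneg (u - v)]
      exact mul_le_mul_of_nonneg_right h7 (norm_nonneg a)
    calc ‖v * Bc s * a - a * (v * Bc s)‖
        ≤ ‖v * (Bc s * a - a * Bc s)‖ + ‖(v * a - a * v) * Bc s‖ := by
          rw [hkey]; exact norm_add_le _ _
      _ ≤ ‖v * a - a * v‖ + 7 * ‖u - v‖ * ‖a‖ := by linarith

/-- The local existence of almost-commuting paths near a fixed unitary. -/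
lemma local_path (M ε : ℝ) (hM : 0 < M) (hε : 0 < ε)
    {v : A} (hv : v ∈ unitary A) (hsp : Set.Finite (spectrum ℂ v)) :
    ∃ δ > 0, ∃ η > 0, ∀ u : A, dist u v < η → u ∈ unitary A →
      ∃ U : ℝ → A, ContinuousOn U (Set.Icc 0 1) ∧
        (∀ t ∈ Set.Icc (0:ℝ) 1, U t ∈ unitary A) ∧ U 0 = u ∧ U 1 = 1 ∧
        ∀ a : A, ‖a‖ ≤ M → ‖u * a - a * u‖ < δ →
          ∀ t ∈ Set.Icc (0:ℝ) 1, ‖U t * a - a * U t‖ < ε := by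
  obtain ⟨δ', hδ'pos, V, hVcont, hVunit, hV0, hV1, hVb⟩ :=
    main_path hv hsp (ε/2) M (by linarith) hM
  set δ'' := min δ' (ε/2) with hδ''def
  have hδ''pos : 0 < δ'' := lt_min hδ'pos (by linarith)
  have hδ''1 : δ'' ≤ δ' := min_le_left _ _
  have hδ''2 : δ'' ≤ ε/2 := min_le_right _ _
  refine ⟨δ''/2, by positivity,
    min (1/2) (min (δ''/(4*(M+1))) (ε/(28*(M+1)))), by positivity, ?_⟩
  intro u hdist hu
  rw [dist_eq_norm] at hdist
  have huv1 : ‖u - v‖ ≤ 1/2 := le_of_lt (lt_of_lt_of_le hdist (min_le_left _ _))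
  have huv2 : ‖u - v‖ < δ''/(4*(M+1)) :=
    lt_of_lt_of_le hdist ((min_le_right _ _).trans (min_le_left _ _))
  have huv3 : ‖u - v‖ < ε/(28*(M+1)) :=
    lt_of_lt_of_le hdist ((min_le_right _ _).trans (min_le_right _ _))
  obtain ⟨B, hBcont, hBunit, hB0, hB1, hBb⟩ := bridge_path hv hu huv1
  refine ⟨fun t => if t ≤ 1/2 then B (2*t) else V (2*t - 1), ?_, ?_, ?_, ?_, ?_⟩
  · apply Continuous.continuousOn
    have hc1 : Continuous fun x : ℝ => B (2*x) := by
      exact hBcont.comp (continuous_const.mul continuous_id)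
    have hc2 : Continuous fun x : ℝ => V (2*x - 1) := by
      exact hVcont.comp ((continuous_const.mul continuous_id).sub continuous_const)
    apply Continuous.if_le hc1 hc2 continuous_id continuous_const
    intro x hx
    simp only [id] at hx
    subst hx
    norm_num [hB1, hV0]
  · intro t _
    show (if t ≤ (1:ℝ)/2 then B (2*t) else V (2*t - 1)) ∈ unitary A
    by_cases h : t ≤ 1/2
    · rw [if_pos h]; exact hBunit (2*t)
    · rw [if_neg h]; exact hVunit (2*t - 1)
  · norm_num [hB0]
  · norm_num [hV1]
  · intro a haM hua t ht
    have hM1 : (0:ℝ) < M + 1 := by linarith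
    have hva : ‖v * a - a * v‖ < δ'' := by
      have h1 : ‖v * a - a * v‖ ≤ ‖u * a - a * u‖ + 2 * ‖v - u‖ * ‖a‖ :=
        comm_perturb v u a
      have h2 : ‖v - u‖ = ‖u - v‖ := norm_sub_rev _ _
      have h3 : 2 * ‖u - v‖ * ‖a‖ ≤ 2 * (δ''/(4*(M+1))) * M := by
        nlinarith [norm_nonneg (u - v), norm_nonneg a, haM,
          (norm_nonneg a).trans haM]
      have h4 : 2 * (δ''/(4*(M+1))) * M ≤ δ''/2 := by
        have hfr : M / (M+1) ≤ 1 := by rw [div_le_one hM1]; linarith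
        have heq : 2 * (δ''/(4*(M+1))) * M = (M/(M+1)) * (δ''/2) := by
          field_simp; ring
        rw [heq]
        nlinarith [mul_le_mul_of_nonneg_right hfr
          (le_of_lt (by positivity : (0:ℝ) < δ''/2))]
      rw [h2] at h1
      linarith
    by_cases h : t ≤ 1/2
    · have hUt : (fun t => if t ≤ (1:ℝ)/2 then B (2*t) else V (2*t - 1)) t = B (2*t) :=
        if_pos h
      rw [hUt]
      have h2t : 2*t ∈ Set.Icc (0:ℝ) 1 := ⟨by linarith [ht.1], by linarith⟩
      have hb := hBb (2*t) h2t a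
      have h5 : 7 * ‖u - v‖ * ‖a‖ ≤ 7 * (ε/(28*(M+1))) * M := by
        nlinarith [norm_nonneg (u - v), norm_nonneg a, haM,
          (norm_nonneg a).trans haM]
      have h6 : 7 * (ε/(28*(M+1))) * M ≤ ε/4 := by
        have hfr : M / (M+1) ≤ 1 := by rw [div_le_one hM1]; linarith
        have heq : 7 * (ε/(28*(M+1))) * M = (M/(M+1)) * (ε/4) := by
          field_simp; ring
        rw [heq]
        nlinarith [mul_le_mul_of_nonneg_right hfr (le_of_lt (by positivity : (0:ℝ) < ε/4))]
      have : ‖v * a - a * v‖ < ε/2 := lt_of_lt_of_le hva hδ''2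
      linarith
    · have hUt : (fun t => if t ≤ (1:ℝ)/2 then B (2*t) else V (2*t - 1)) t = V (2*t - 1) :=
        if_neg h
      rw [hUt]
      push_neg at h
      have h2t : 2*t - 1 ∈ Set.Icc (0:ℝ) 1 := ⟨by linarith, by linarith [ht.2]⟩
      have := hVb (2*t - 1) h2t a haM (lt_of_lt_of_le hva hδ''1)
      linarith

end AlmostCommutingPath
open AlmostCommutingPath in
/-- Almost-commuting unitaries can be connected to the identity through a path of
unitaries which almost commute with the given finite set (Lemma `frombk`). -/
theorem exists_path_of_unitaries_almost_commuting
    (ε : ℝ) (hε : 0 < ε) (n : ℕ) (hn : 1 ≤ n) (M : ℝ) (hM : 0 < M) :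
    ∃ δ > 0, ∀ F : Finset (Matrix (Fin n) (Fin n) ℂ), (∀ a ∈ F, ‖a‖ ≤ M) →
      ∀ u : Matrix (Fin n) (Fin n) ℂ, u ∈ unitary (Matrix (Fin n) (Fin n) ℂ) →
      (∀ a ∈ F, ‖u * a - a * u‖ < δ) →
      ∃ U : ℝ → Matrix (Fin n) (Fin n) ℂ, ContinuousOn U (Set.Icc 0 1) ∧
        (∀ t ∈ Set.Icc (0:ℝ) 1, U t ∈ unitary (Matrix (Fin n) (Fin n) ℂ)) ∧
        U 0 = u ∧ U 1 = 1 ∧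
        ∀ t ∈ Set.Icc (0:ℝ) 1, ∀ a ∈ F, ‖U t * a - a * U t‖ < ε := by
  haveI : Nonempty (Fin n) := ⟨⟨0, hn⟩⟩
  set A := Matrix (Fin n) (Fin n) ℂ with hA
  haveI : Nontrivial A := inferInstance
  set K : Set A := {x | x ∈ unitary A} with hK
  have hKb : K ⊆ Metric.closedBall 0 1 := by
    intro x hx
    rw [Metric.mem_closedBall, dist_zero_right, norm_one_of_unitary hx]
  have hKc : IsClosed K := by
    have hKeq : K = (fun x : A => (star x * x, x * star x)) ⁻¹' {((1:A), (1:A))} := by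
      ext x
      simp [hK, Unitary.mem_iff, Prod.ext_iff]
    rw [hKeq]
    exact isClosed_singleton.preimage
      ((continuous_star.mul continuous_id).prodMk (continuous_id.mul continuous_star))
  have hKcomp : IsCompact K :=
    (isCompact_closedBall (0:A) 1).of_isClosed_subset hKc hKb
  obtain ⟨δ, hδpos, hδ⟩ := compact_uniform hKcomp
    (fun δ u => u ∈ unitary A →
      ∃ U : ℝ → A, ContinuousOn U (Set.Icc 0 1) ∧
        (∀ t ∈ Set.Icc (0:ℝ) 1, U t ∈ unitary A) ∧ U 0 = u ∧ U 1 = 1 ∧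
        ∀ a : A, ‖a‖ ≤ M → ‖u * a - a * u‖ < δ →
          ∀ t ∈ Set.Icc (0:ℝ) 1, ‖U t * a - a * U t‖ < ε)
    (by
      intro δ₁ δ₂ w hle h hw
      obtain ⟨U, h1, h2, h3, h4, h5⟩ := h hw
      exact ⟨U, h1, h2, h3, h4, fun a haM hua => h5 a haM (lt_of_lt_of_le hua hle)⟩)
    (by
      intro v hvK
      obtain ⟨δv, hδv, ηv, hηv, hloc⟩ :=
        local_path M ε hM hε hvK (Matrix.finite_spectrum v)
      exact ⟨δv, hδv, ηv, hηv, fun u hu humem => hloc u hu humem⟩)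
  refine ⟨δ, hδpos, ?_⟩
  intro F hF u hu hcomm
  obtain ⟨U, h1, h2, h3, h4, h5⟩ := hδ u hu hu
  exact ⟨U, h1, h2, h3, h4, fun t ht a haF => h5 a (hF a haF) (hcomm a haF) t ht⟩
end

section
/- Let X be a compact metric space, n ≥ 1 an integer, and tr the normalized trace on Mₙ(ℂ). For every ε > 0 and every finite set F ⊂ C(X), there exist δ > 0 and a finite set G ⊂ C(X) such that: whenever φ, ψ : C(X) → Mₙ(ℂ) are unital *-homomorphisms with |tr(φ(g)) − tr(ψ(g))| < δ for all g ∈ G, there exists a unitary u ∈ Mₙ(ℂ) with ‖u*φ(f)u − ψ(f)‖ < ε for all f ∈ F. -/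
set_option maxHeartbeats 4000000

open scoped Matrix.Norms.L2Operator ComplexStarModule
open Matrix

section Aux

variable {X : Type*} [MetricSpace X] [CompactSpace X]

omit [CompactSpace X] in
private theorem exists_eigenbasis {n : ℕ}
    (φ : C(X, ℂ) →⋆ₐ[ℂ] Matrix (Fin n) (Fin n) ℂ) :
    ∃ (b : OrthonormalBasis (Fin n) ℂ (EuclideanSpace ℂ (Fin n))),
      ∀ i, ∀ f : C(X, ℂ), ∃ c : ℂ, Matrix.toEuclideanLin (φ f) (b i) = c • b i := by
  classical
  have hmulE : ∀ A B : Matrix (Fin n) (Fin n) ℂ,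
      Matrix.toEuclideanLin (A * B) = Matrix.toEuclideanLin A ∘ₗ Matrix.toEuclideanLin B := by
    intro A B
    apply LinearMap.ext; intro v
    simp [Matrix.toEuclideanLin_apply, Matrix.mulVec_mulVec]
  set R : Submodule ℂ (Matrix (Fin n) (Fin n) ℂ) := LinearMap.range φ.toLinearMap with hR
  set m := Module.finrank ℂ R with hm
  set bR : Module.Basis (Fin m) ℂ R := Module.finBasis ℂ R with hbR
  have hg : ∀ k : Fin m, ∃ g : C(X, ℂ), φ g = (bR k : Matrix (Fin n) (Fin n) ℂ) := by
    intro k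
    obtain ⟨g, hgeq⟩ := (bR k).2
    exact ⟨g, hgeq⟩
  choose g hgeq using hg
  have hspan : ∀ f : C(X, ℂ), ∃ c : Fin m → ℂ, φ f = ∑ k, c k • φ (g k) := by
    intro f
    have hmem : φ f ∈ R := ⟨f, rfl⟩
    refine ⟨fun k => bR.repr ⟨φ f, hmem⟩ k, ?_⟩
    have := bR.sum_repr ⟨φ f, hmem⟩
    calc φ f = ((∑ k, bR.repr ⟨φ f, hmem⟩ k • bR k : R) : Matrix (Fin n) (Fin n) ℂ) := by
          rw [this]
      _ = ∑ k, bR.repr ⟨φ f, hmem⟩ k • φ (g k) := by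
          push_cast [hgeq]; rfl
  set h : Fin m × Bool → C(X, ℂ) :=
    fun p => if p.2 then (ℑ (g p.1) : C(X, ℂ)) else (ℜ (g p.1) : C(X, ℂ)) with hh
  have hsa : ∀ p, IsSelfAdjoint (h p) := by
    intro p
    rw [hh]
    dsimp only
    split
    · exact (ℑ (g p.1)).2
    · exact (ℜ (g p.1)).2
  set T : Fin m × Bool → Module.End ℂ (EuclideanSpace ℂ (Fin n)) :=
    fun p => Matrix.toEuclideanLin (φ (h p)) with hT
  have hsym : ∀ p, (T p).IsSymmetric := by
    intro p
    rw [hT]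
    rw [← Matrix.isHermitian_iff_isSymmetric]
    show (φ (h p))ᴴ = φ (h p)
    rw [← Matrix.star_eq_conjTranspose, ← map_star φ (h p), (hsa p).star_eq]
  have hcomm : Pairwise (Function.onFun Commute T) := by
    intro p q _
    show T p * T q = T q * T p
    ext v
    simp only [hT, Module.End.mul_apply, ← LinearMap.comp_apply, ← hmulE,
      ← _root_.map_mul φ, mul_comm (h p) (h q)]
  have htop := LinearMap.IsSymmetric.iSup_iInf_eq_top_of_commute hsym hcomm
  have hfam := LinearMap.IsSymmetric.orthogonalFamily_iInf_eigenspaces hsym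
  set V : (Fin m × Bool → ℂ) → Submodule ℂ (EuclideanSpace ℂ (Fin n)) :=
    fun χ => ⨅ j, Module.End.eigenspace (T j) (χ j) with hV
  have hint : DirectSum.IsInternal V := by
    rw [OrthogonalFamily.isInternal_iff hfam, htop, Submodule.top_orthogonal_eq_bot]
  set bb : Module.Basis (Σ χ : Fin m × Bool → ℂ, Fin (Module.finrank ℂ (V χ))) ℂ
      (EuclideanSpace ℂ (Fin n)) :=
    hint.collectedBasis (fun χ => (stdOrthonormalBasis ℂ (V χ)).toBasis) with hbb
  haveI : Fintype (Σ χ : Fin m × Bool → ℂ, Fin (Module.finrank ℂ (V χ))) :=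
    FiniteDimensional.fintypeBasisIndex bb
  have hortho : Orthonormal ℂ bb := by
    rw [hbb]
    simpa using hfam.orthonormal_sigma_orthonormal
      (show ∀ χ, Orthonormal ℂ (stdOrthonormalBasis ℂ (V χ)).toBasis by simp)
  set b0 := bb.toOrthonormalBasis hortho with hb0
  have hcard : Fintype.card (Σ χ : Fin m × Bool → ℂ, Fin (Module.finrank ℂ (V χ))) = n := by
    rw [← Module.finrank_eq_card_basis bb]
    simp [finrank_euclideanSpace]
  set e := Fintype.equivFinOfCardEq hcard with he
  refine ⟨b0.reindex e, ?_⟩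
  intro i f
  set b := b0.reindex e with hb
  set χ := (e.symm i).1 with hχ
  have hsub : ∀ p, b i ∈ Module.End.eigenspace (T p) (χ p) := by
    have hmem : b i ∈ V χ := by
      rw [hb, OrthonormalBasis.coe_reindex]
      show b0 (e.symm i) ∈ V χ
      rw [hb0, Module.Basis.coe_toOrthonormalBasis]
      exact hint.collectedBasis_mem _ (e.symm i)
    intro p
    exact (Submodule.mem_iInf _).mp hmem p
  have heigh : ∀ p, Matrix.toEuclideanLin (φ (h p)) (b i) = χ p • b i := by
    intro p
    exact Module.End.mem_eigenspace_iff.mp (hsub p)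
  have heigg : ∀ k : Fin m, Matrix.toEuclideanLin (φ (g k)) (b i)
      = (χ (k, false) + Complex.I * χ (k, true)) • b i := by
    intro k
    have hdec : (g k : C(X, ℂ)) = h (k, false) + Complex.I • h (k, true) := by
      rw [hh]; dsimp only
      rw [if_neg (by simp), if_pos rfl]
      exact (realPart_add_I_smul_imaginaryPart (g k)).symm
    have h2 : φ (Complex.I • h (k, true)) = Complex.I • φ (h (k, true)) :=
      map_smul φ.toAlgHom.toLinearMap _ _
    rw [hdec, map_add, h2, map_add, LinearMap.add_apply, heigh (k, false),
      LinearEquiv.map_smul, LinearMap.smul_apply, heigh (k, true), smul_smul, ← add_smul]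
  obtain ⟨c, hc⟩ := hspan f
  refine ⟨∑ k, c k * (χ (k, false) + Complex.I * χ (k, true)), ?_⟩
  rw [hc, map_sum, LinearMap.sum_apply, Finset.sum_smul]
  refine Finset.sum_congr rfl fun k _ => ?_
  rw [LinearEquiv.map_smul, LinearMap.smul_apply, heigg k, smul_smul]

private theorem exists_eigenbasis' {n : ℕ}
    (φ : C(X, ℂ) →⋆ₐ[ℂ] Matrix (Fin n) (Fin n) ℂ)
    (b : OrthonormalBasis (Fin n) ℂ (EuclideanSpace ℂ (Fin n)))
    (hb : ∀ i, ∀ f : C(X, ℂ), ∃ c : ℂ, Matrix.toEuclideanLin (φ f) (b i) = c • b i) :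
    ∃ x : Fin n → X,
      ∀ i, ∀ f : C(X, ℂ), Matrix.toEuclideanLin (φ f) (b i) = f (x i) • b i := by
  classical
  have hmulE : ∀ A B : Matrix (Fin n) (Fin n) ℂ,
      Matrix.toEuclideanLin (A * B) = Matrix.toEuclideanLin A ∘ₗ Matrix.toEuclideanLin B := by
    intro A B
    apply LinearMap.ext; intro v
    simp [Matrix.toEuclideanLin_apply, Matrix.mulVec_mulVec]
  have hone : Matrix.toEuclideanLin (1 : Matrix (Fin n) (Fin n) ℂ) = LinearMap.id := by
    apply LinearMap.ext; intro v
    simp [Matrix.toEuclideanLin_apply, Matrix.one_mulVec]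
  have hbne : ∀ i, b i ≠ 0 := by
    intro i
    have := b.toBasis.ne_zero i
    rwa [OrthonormalBasis.coe_toBasis] at this
  have key : ∀ i : Fin n, ∃ x : X,
      ∀ f : C(X, ℂ), Matrix.toEuclideanLin (φ f) (b i) = f x • b i := by
    intro i
    choose ev hev using hb i
    have huniq : ∀ (f : C(X, ℂ)) (c : ℂ),
        Matrix.toEuclideanLin (φ f) (b i) = c • b i → ev f = c := by
      intro f c hcc
      have : ev f • b i = c • b i := by rw [← hev f, hcc]
      exact smul_left_injective ℂ (hbne i) this
    have hone' : ev 1 = 1 := huniq 1 1 (by rw [_root_.map_one φ, hone]; simp)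
    have hmul' : ∀ f₁ f₂, ev (f₁ * f₂) = ev f₁ * ev f₂ := by
      intro f₁ f₂
      refine huniq _ _ ?_
      rw [_root_.map_mul φ, hmulE, LinearMap.comp_apply, hev f₂, LinearMap.map_smul, hev f₁,
        smul_smul, mul_comm (ev f₂)]
    have hzero' : ev 0 = 0 := huniq 0 0 (by simp)
    have hadd' : ∀ f₁ f₂, ev (f₁ + f₂) = ev f₁ + ev f₂ := by
      intro f₁ f₂
      refine huniq _ _ ?_
      rw [_root_.map_add φ, map_add, LinearMap.add_apply, hev f₁, hev f₂, add_smul]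
    have hcomm' : ∀ r : ℂ, ev (algebraMap ℂ C(X, ℂ) r) = r := by
      intro r
      refine huniq _ _ ?_
      rw [AlgHomClass.commutes φ r, Algebra.algebraMap_eq_smul_one, LinearEquiv.map_smul,
        LinearMap.smul_apply, hone, LinearMap.id_apply]
    set Λ : C(X, ℂ) →ₐ[ℂ] ℂ :=
      { toFun := ev, map_one' := hone', map_mul' := fun _ _ => hmul' _ _,
        map_zero' := hzero', map_add' := fun _ _ => hadd' _ _,
        commutes' := hcomm' } with hΛ
    obtain ⟨x, hxx⟩ := (WeakDual.CharacterSpace.continuousMapEval_bijective X ℂ).2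
      (WeakDual.CharacterSpace.equivAlgHom.symm Λ)
    refine ⟨x, fun f => ?_⟩
    have h1 : (WeakDual.CharacterSpace.continuousMapEval X ℂ x) f = f x :=
      WeakDual.CharacterSpace.continuousMapEval_apply_apply X ℂ x f
    have h2 : ((WeakDual.CharacterSpace.equivAlgHom.symm Λ :
        WeakDual.characterSpace ℂ C(X, ℂ)) : C(X, ℂ) → ℂ) f = ev f := by
      rw [WeakDual.CharacterSpace.equivAlgHom_symm_coe]; rfl
    rw [hev f]
    congr 1
    rw [← h2, ← hxx, h1]
  choose x hx using key
  exact ⟨x, fun i => hx i⟩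

omit [CompactSpace X] in
private theorem exists_diag {n : ℕ}
    (φ : C(X, ℂ) →⋆ₐ[ℂ] Matrix (Fin n) (Fin n) ℂ)
    (b : OrthonormalBasis (Fin n) ℂ (EuclideanSpace ℂ (Fin n))) (x : Fin n → X)
    (hx : ∀ i, ∀ f : C(X, ℂ), Matrix.toEuclideanLin (φ f) (b i) = f (x i) • b i) :
    ∃ V : Matrix (Fin n) (Fin n) ℂ, V ∈ unitary (Matrix (Fin n) (Fin n) ℂ) ∧
      ∀ f : C(X, ℂ), φ f = V * Matrix.diagonal (fun i => f (x i)) * star V := by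
  classical
  set V : Matrix (Fin n) (Fin n) ℂ := Matrix.of (fun k j => b j k) with hV
  have hVu : V ∈ unitary (Matrix (Fin n) (Fin n) ℂ) := by
    rw [Matrix.mem_unitaryGroup_iff']
    ext i j
    have horth := orthonormal_iff_ite.mp b.orthonormal i j
    rw [PiLp.inner_apply] at horth
    simp only [Matrix.mul_apply, Matrix.conjTranspose_apply, Matrix.one_apply, hV,
      Matrix.of_apply, Matrix.star_apply]
    rw [← horth]
    simp [RCLike.inner_apply, mul_comm]
  have hmv : ∀ (f : C(X, ℂ)) (j k : Fin n),
      ((φ f) *ᵥ (fun m => b j m)) k = f (x j) * b j k := by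
    intro f j k
    have h1 := hx j f
    rw [Matrix.toEuclideanLin_apply] at h1
    have := congrFun (congrArg (WithLp.equiv 2 (Fin n → ℂ)) h1) k
    simpa using this
  have hdiag : ∀ f : C(X, ℂ), φ f * V = V * Matrix.diagonal (fun j => f (x j)) := by
    intro f
    ext k j
    rw [Matrix.mul_diagonal]
    show ∑ m, (φ f) k m * V m j = V k j * f (x j)
    have := hmv f j k
    rw [Matrix.mulVec, dotProduct] at this
    calc ∑ m, (φ f) k m * V m j = ∑ i, φ f k i * b j i := rfl
      _ = f (x j) * b j k := this
      _ = V k j * f (x j) := by simp [hV, mul_comm]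
  refine ⟨V, hVu, fun f => ?_⟩
  have h2 : V * star V = 1 := hVu.2
  calc φ f = φ f * (V * star V) := by rw [h2, mul_one]
    _ = (φ f * V) * star V := by rw [mul_assoc]
    _ = V * Matrix.diagonal (fun i => f (x i)) * star V := by rw [hdiag]

private theorem trace_eq_sum {n : ℕ} (V : Matrix (Fin n) (Fin n) ℂ)
    (hVu : V ∈ unitary (Matrix (Fin n) (Fin n) ℂ)) (d : Fin n → ℂ) :
    (V * Matrix.diagonal d * star V).trace = ∑ i, d i := by
  rw [Matrix.trace_mul_cycle, hVu.1, one_mul, Matrix.trace_diagonal]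

private theorem norm_diagonal_le {n : ℕ} (d : Fin n → ℂ) (c : ℝ) (hc : 0 ≤ c)
    (h : ∀ i, ‖d i‖ ≤ c) : ‖Matrix.diagonal d‖ ≤ c := by
  rw [Matrix.l2_opNorm_def]
  refine ContinuousLinearMap.opNorm_le_bound _ hc fun v => ?_
  show ‖Matrix.toEuclideanLin (Matrix.diagonal d) v‖ ≤ c * ‖v‖
  rw [Matrix.toEuclideanLin_apply]
  rw [EuclideanSpace.norm_eq, EuclideanSpace.norm_eq]
  rw [← Real.sqrt_sq hc, ← Real.sqrt_mul (by positivity),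
    Real.sqrt_le_sqrt_iff (by positivity)]
  · rw [Finset.mul_sum]
    refine Finset.sum_le_sum fun i _ => ?_
    have : WithLp.ofLp (WithLp.toLp 2
        (Matrix.diagonal d *ᵥ WithLp.ofLp v)) i = d i * v i := by
      simp [Matrix.mulVec_diagonal]
    rw [this, norm_mul, mul_pow]
    exact mul_le_mul_of_nonneg_right
      (pow_le_pow_left₀ (norm_nonneg _) (h i) 2) (sq_nonneg _)

private lemma perm_unitary {n : ℕ} (W : Matrix (Fin n) (Fin n) ℂ)
    (hW : W ∈ unitary (Matrix (Fin n) (Fin n) ℂ)) (σ : Equiv.Perm (Fin n)) :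
    W.submatrix id ⇑σ ∈ unitary (Matrix (Fin n) (Fin n) ℂ) := by
  rw [Matrix.mem_unitaryGroup_iff']
  have hstar : star (W.submatrix id ⇑σ) = (star W).submatrix ⇑σ id := by
    show (W.submatrix id ⇑σ)ᴴ = (Wᴴ).submatrix ⇑σ id
    rw [Matrix.conjTranspose_submatrix]
  rw [hstar]
  rw [show ((star W).submatrix ⇑σ id : Matrix (Fin n) (Fin n) ℂ)
      = (star W).submatrix ⇑σ ⇑(Equiv.refl (Fin n)) from rfl,
    show (W.submatrix id ⇑σ : Matrix (Fin n) (Fin n) ℂ)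
      = W.submatrix ⇑(Equiv.refl (Fin n)) ⇑σ from rfl,
    Matrix.submatrix_mul_equiv, hW.1, Matrix.submatrix_one_equiv]

private lemma perm_diag {n : ℕ} (W : Matrix (Fin n) (Fin n) ℂ) (σ : Equiv.Perm (Fin n))
    (d : Fin n → ℂ) :
    W * Matrix.diagonal d * star W
      = (W.submatrix id ⇑σ) * Matrix.diagonal (d ∘ ⇑σ) * star (W.submatrix id ⇑σ) := by
  have hstar : star (W.submatrix id ⇑σ) = (star W).submatrix ⇑σ id := by
    show (W.submatrix id ⇑σ)ᴴ = (Wᴴ).submatrix ⇑σ id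
    rw [Matrix.conjTranspose_submatrix]
  rw [hstar, ← Matrix.submatrix_diagonal_equiv d σ]
  rw [show (W.submatrix id ⇑σ : Matrix (Fin n) (Fin n) ℂ)
      = W.submatrix ⇑(Equiv.refl (Fin n)) ⇑σ from rfl,
    Matrix.submatrix_mul_equiv]
  rw [show ((W * Matrix.diagonal d).submatrix ⇑(Equiv.refl (Fin n)) ⇑σ
        * (star W).submatrix ⇑σ id : Matrix (Fin n) (Fin n) ℂ)
      = (W * Matrix.diagonal d).submatrix id ⇑σ
        * (star W).submatrix ⇑σ ⇑(Equiv.refl (Fin n)) from rfl,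
    Matrix.submatrix_mul_equiv]
  simp

noncomputable def bumpR (η : ℝ) (T : Finset X) : C(X, ℝ) :=
  ⟨fun p => max 0 (min 1 (2 - (2/η) * Metric.infDist p ↑T)),
   continuous_const.max (continuous_const.min (continuous_const.sub
     (continuous_const.mul (Metric.continuous_infDist_pt _))))⟩

noncomputable def bumpC (η : ℝ) (T : Finset X) : C(X, ℂ) :=
  ⟨fun p => ((bumpR η T p : ℝ) : ℂ), Complex.continuous_ofReal.comp (bumpR η T).continuous⟩

omit [CompactSpace X] in
private lemma bumpR_nonneg (η : ℝ) (T : Finset X) (p : X) : 0 ≤ bumpR η T p := le_max_left _ _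

omit [CompactSpace X] in
private lemma bumpR_le_one (η : ℝ) (T : Finset X) (p : X) : bumpR η T p ≤ 1 :=
  max_le zero_le_one (min_le_left _ _)

omit [CompactSpace X] in
private lemma bumpR_eq_one {η : ℝ} (hη : 0 < η) {T : Finset X} {p : X}
    (h : ∃ z ∈ T, dist p z ≤ η/2) : bumpR η T p = 1 := by
  obtain ⟨z, hzT, hz⟩ := h
  have hinf : Metric.infDist p ↑T ≤ η/2 :=
    le_trans (Metric.infDist_le_dist_of_mem (by exact_mod_cast hzT)) hz
  have h1 : (1 : ℝ) ≤ 2 - (2/η) * Metric.infDist p ↑T := by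
    have hmul : (2/η) * Metric.infDist p ↑T ≤ (2/η) * (η/2) :=
      mul_le_mul_of_nonneg_left hinf (by positivity)
    have heq : (2/η) * (η/2) = 1 := by field_simp
    linarith [heq ▸ hmul]
  show max 0 (min 1 (2 - (2/η) * Metric.infDist p ↑T)) = 1
  rw [min_eq_left h1, max_eq_right zero_le_one]

omit [CompactSpace X] in
private lemma bumpR_eq_zero {η : ℝ} (hη : 0 < η) {T : Finset X} {p : X} (hT : T.Nonempty)
    (h : ∀ z ∈ T, ¬ dist p z < η) : bumpR η T p = 0 := by
  have hTne : (↑T : Set X).Nonempty := by exact_mod_cast hT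
  have hinf : η ≤ Metric.infDist p ↑T := by
    by_contra hlt
    push_neg at hlt
    obtain ⟨z, hzT, hz⟩ := (Metric.infDist_lt_iff hTne).mp hlt
    exact h z (by exact_mod_cast hzT) hz
  have h0 : 2 - (2/η) * Metric.infDist p ↑T ≤ 0 := by
    have hmul : (2/η) * η ≤ (2/η) * Metric.infDist p ↑T :=
      mul_le_mul_of_nonneg_left hinf (by positivity)
    have heq : (2/η) * η = 2 := by field_simp
    linarith
  show max 0 (min 1 (2 - (2/η) * Metric.infDist p ↑T)) = 0
  rw [max_eq_left (le_trans (min_le_right _ _) h0)]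

omit [CompactSpace X] in
private lemma exists_perm {n : ℕ} {η : ℝ} (hη : 0 < η) (s : Finset X)
    (hnet : ∀ p : X, ∃ z ∈ s, dist p z ≤ η/2) (x y : Fin n → X)
    (htr : ∀ T ∈ s.powerset, |(∑ i, bumpR η T (x i)) - (∑ i, bumpR η T (y i))| < 1) :
    ∃ σ : Equiv.Perm (Fin n), ∀ i, dist (x i) (y (σ i)) ≤ 2*η := by
  classical
  set t : Fin n → Finset (Fin n) :=
    fun i => Finset.univ.filter (fun j => dist (x i) (y j) ≤ 2*η) with ht
  have hall : ∀ S : Finset (Fin n), S.card ≤ (S.biUnion t).card := by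
    intro S
    rcases S.eq_empty_or_nonempty with rfl | hS
    · simp
    set T : Finset X := s.filter (fun z => ∃ i ∈ S, dist (x i) z ≤ η/2) with hT
    have hTmem : T ∈ s.powerset := Finset.mem_powerset.mpr (Finset.filter_subset _ _)
    have h1 : (S.card : ℝ) ≤ ∑ i, bumpR η T (x i) := by
      have hone : ∀ i ∈ S, bumpR η T (x i) = 1 := by
        intro i hi
        obtain ⟨z, hzs, hz⟩ := hnet (x i)
        exact bumpR_eq_one hη ⟨z, Finset.mem_filter.mpr ⟨hzs, ⟨i, hi, hz⟩⟩, hz⟩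
      calc (S.card : ℝ) = ∑ _i ∈ S, (1:ℝ) := by simp
        _ = ∑ i ∈ S, bumpR η T (x i) :=
            Finset.sum_congr rfl fun i hi => (hone i hi).symm
        _ ≤ ∑ i, bumpR η T (x i) :=
            Finset.sum_le_sum_of_subset_of_nonneg (Finset.subset_univ S)
              (fun i _ _ => bumpR_nonneg η T (x i))
    have hTne : T.Nonempty := by
      obtain ⟨i, hi⟩ := hS
      obtain ⟨z, hzs, hz⟩ := hnet (x i)
      exact ⟨z, Finset.mem_filter.mpr ⟨hzs, ⟨i, hi, hz⟩⟩⟩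
    set Q : Finset (Fin n) := Finset.univ.filter (fun j => ∃ z ∈ T, dist (y j) z < η) with hQ
    have hQsub : Q ⊆ S.biUnion t := by
      intro j hj
      obtain ⟨z, hzT, hz⟩ := (Finset.mem_filter.mp hj).2
      obtain ⟨hzs, i, hiS, hiz⟩ := Finset.mem_filter.mp hzT
      refine Finset.mem_biUnion.mpr ⟨i, hiS, Finset.mem_filter.mpr ⟨Finset.mem_univ _, ?_⟩⟩
      calc dist (x i) (y j) ≤ dist (x i) z + dist z (y j) := dist_triangle _ _ _
        _ ≤ η/2 + η := by rw [dist_comm z (y j)]; exact add_le_add hiz hz.le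
        _ ≤ 2*η := by linarith
    have h2 : ∑ j, bumpR η T (y j) ≤ ((S.biUnion t).card : ℝ) := by
      have hzero : ∀ j ∈ Finset.univ, j ∉ Q → bumpR η T (y j) = 0 := by
        intro j _ hj
        refine bumpR_eq_zero hη hTne fun z hzT hz => ?_
        exact hj (Finset.mem_filter.mpr ⟨Finset.mem_univ _, ⟨z, hzT, hz⟩⟩)
      calc ∑ j, bumpR η T (y j) = ∑ j ∈ Q, bumpR η T (y j) :=
            (Finset.sum_subset (Finset.subset_univ Q) hzero).symm
        _ ≤ ∑ _j ∈ Q, (1:ℝ) := Finset.sum_le_sum fun j _ => bumpR_le_one η T (y j)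
        _ = Q.card := by simp
        _ ≤ ((S.biUnion t).card : ℝ) := by exact_mod_cast Finset.card_le_card hQsub
    have habs := abs_lt.mp (htr T hTmem)
    have hfin : (S.card : ℝ) < ((S.biUnion t).card : ℝ) + 1 := by linarith
    have : S.card < (S.biUnion t).card + 1 := by exact_mod_cast hfin
    omega
  obtain ⟨σf, hinj, hmem⟩ := (Finset.all_card_le_biUnion_card_iff_exists_injective t).mp hall
  refine ⟨Equiv.ofBijective σf (Finite.injective_iff_bijective.mp hinj), fun i => ?_⟩
  have := hmem i
  rw [ht] at this
  exact (Finset.mem_filter.mp this).2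

end Aux

/-- Uniqueness lemma: two unital *-homomorphisms `C(X) → Mₙ(ℂ)` whose normalized traces
almost agree on a suitable finite set are approximately unitarily equivalent. -/
theorem uniqueness_finite_dim
    {X : Type*} [MetricSpace X] [CompactSpace X] (n : ℕ) (hn : 1 ≤ n)
    (ε : ℝ) (hε : 0 < ε) (F : Finset C(X, ℂ)) :
    ∃ δ > 0, ∃ G : Finset C(X, ℂ),
      ∀ φ ψ : C(X, ℂ) →⋆ₐ[ℂ] Matrix (Fin n) (Fin n) ℂ,
        (∀ g ∈ G, ‖(φ g).trace / n - (ψ g).trace / n‖ < δ) →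
        ∃ u ∈ unitary (Matrix (Fin n) (Fin n) ℂ),
          ∀ f ∈ F, ‖star u * φ f * u - ψ f‖ < ε := by
  classical
  have hcont : ∀ f : C(X, ℂ), ∃ d > 0, ∀ a b : X, dist a b < d → dist (f a) (f b) < ε/2 := by
    intro f
    have huc : UniformContinuous f := CompactSpace.uniformContinuous_of_continuous f.continuous
    exact Metric.uniformContinuous_iff.mp huc (ε/2) (by positivity)
  choose d hd hd2 using hcont
  set η : ℝ := if h : F.Nonempty then (F.inf' h d)/3 else 1 with hη
  have hηpos : 0 < η := by
    rw [hη]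
    split
    · next h =>
        have : 0 < F.inf' h d := (Finset.lt_inf'_iff _).mpr fun b _ => hd b
        linarith
    · exact one_pos
  have hηd : ∀ f ∈ F, 2*η < d f := by
    intro f hf
    rw [hη, dif_pos ⟨f, hf⟩]
    have h1 : F.inf' ⟨f, hf⟩ d ≤ d f := Finset.inf'_le d hf
    have h2 : 0 < F.inf' ⟨f, hf⟩ d := (Finset.lt_inf'_iff _).mpr fun b _ => hd b
    linarith
  obtain ⟨t0, -, ht0fin, ht0cov⟩ :=
    finite_cover_balls_of_compact (isCompact_univ (X := X)) (half_pos hηpos)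
  set s : Finset X := ht0fin.toFinset with hs
  have hnet : ∀ p : X, ∃ z ∈ s, dist p z ≤ η/2 := by
    intro p
    have := ht0cov (Set.mem_univ p)
    rw [Set.mem_iUnion₂] at this
    obtain ⟨z, hz, hpz⟩ := this
    exact ⟨z, by simpa [hs] using hz, (Metric.mem_ball.mp hpz).le⟩
  set G : Finset C(X, ℂ) := (s.powerset).image (fun T => bumpC η T) with hG
  refine ⟨1/(n+1), by positivity, G, ?_⟩
  intro φ ψ hyp
  obtain ⟨bφ, hbφ⟩ := exists_eigenbasis φ
  obtain ⟨x, hx⟩ := exists_eigenbasis' φ bφ hbφ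
  obtain ⟨V, hVu, hVd⟩ := exists_diag φ bφ x hx
  obtain ⟨bψ, hbψ⟩ := exists_eigenbasis ψ
  obtain ⟨y, hy⟩ := exists_eigenbasis' ψ bψ hbψ
  obtain ⟨W, hWu, hWd⟩ := exists_diag ψ bψ y hy
  have htr : ∀ T ∈ s.powerset, |(∑ i, bumpR η T (x i)) - (∑ i, bumpR η T (y i))| < 1 := by
    intro T hT
    have hg : bumpC η T ∈ G := by
      rw [hG]
      exact Finset.mem_image_of_mem _ hT
    have habs := hyp _ hg
    have htx : (φ (bumpC η T)).trace = ((∑ i, bumpR η T (x i) : ℝ) : ℂ) := by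
      rw [hVd, trace_eq_sum _ hVu]
      rw [Complex.ofReal_sum]
      rfl
    have hty : (ψ (bumpC η T)).trace = ((∑ i, bumpR η T (y i) : ℝ) : ℂ) := by
      rw [hWd, trace_eq_sum _ hWu]
      rw [Complex.ofReal_sum]
      rfl
    rw [htx, hty] at habs
    set a : ℝ := ∑ i, bumpR η T (x i)
    set b : ℝ := ∑ i, bumpR η T (y i)
    have hrw : ((a : ℂ)/n - (b : ℂ)/n) = (((a - b)/n : ℝ) : ℂ) := by
      push_cast
      ring
    rw [hrw, Complex.norm_real, Real.norm_eq_abs] at habs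
    have hnpos : (0:ℝ) < n := by exact_mod_cast hn
    rw [abs_div, abs_of_pos hnpos, div_lt_iff₀ hnpos] at habs
    have : 1/((n:ℝ)+1) * n < 1 := by
      rw [div_mul_eq_mul_div, one_mul, div_lt_one (by positivity)]
      linarith
    linarith
  obtain ⟨σ, hσ⟩ := exists_perm hηpos s hnet x y htr
  set W' : Matrix (Fin n) (Fin n) ℂ := W.submatrix id ⇑σ with hW'
  have hW'u : W' ∈ unitary (Matrix (Fin n) (Fin n) ℂ) := perm_unitary W hWu σ
  refine ⟨V * star W', mul_mem hVu (Unitary.star_mem hW'u), ?_⟩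
  intro f hf
  have hstaru : star (V * star W') = W' * star V := by rw [StarMul.star_mul, star_star]
  have hcollapse : ∀ Z : Matrix (Fin n) (Fin n) ℂ, star V * (V * Z) = Z := fun Z => by
    rw [← mul_assoc, hVu.1, one_mul]
  have hmain : star (V * star W') * φ f * (V * star W')
      = W' * Matrix.diagonal (fun i => f (x i)) * star W' := by
    rw [hstaru, hVd f]
    calc (W' * star V) * (V * Matrix.diagonal (fun i => f (x i)) * star V) * (V * star W')
        = W' * (star V * (V * (Matrix.diagonal (fun i => f (x i))
            * (star V * (V * star W'))))) := by
          simp only [mul_assoc]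
      _ = W' * Matrix.diagonal (fun i => f (x i)) * star W' := by
          rw [hcollapse, hcollapse, mul_assoc]
  rw [hmain, hWd f, perm_diag W σ (fun i => f (y i)), ← hW']
  have hdiff : W' * Matrix.diagonal (fun i => f (x i)) * star W'
      - W' * Matrix.diagonal ((fun i => f (y i)) ∘ ⇑σ) * star W'
      = W' * (Matrix.diagonal (fun i => f (x i) - f (y (σ i)))) * star W' := by
    rw [← sub_mul, ← mul_sub]
    congr 2
    rw [Matrix.diagonal_sub]
    rfl
  rw [hdiff]
  rw [mul_assoc, CStarRing.norm_mem_unitary_mul _ hW'u,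
    CStarRing.norm_mul_mem_unitary _ (Unitary.star_mem hW'u)]
  refine lt_of_le_of_lt (norm_diagonal_le _ (ε/2) (by positivity) fun i => ?_) (by linarith)
  have hdlt : dist (x i) (y (σ i)) < d f := lt_of_le_of_lt (hσ i) (hηd f hf)
  have := hd2 f (x i) (y (σ i)) hdlt
  rw [dist_eq_norm] at this
  exact this.le
end

section
/- Let X be a compact metric space, n ≥ 1 an integer, and M > 0. For every ε > 0 and every finite subset F ⊂ C(X) there exist δ > 0 and a finite subset G ⊂ C(X) such that: for any unital map φ : C(X) → Mₙ(ℂ) with ‖φ(f)‖ ≤ M whenever ‖f‖ ≤ 1, satisfying ‖φ(λ₁x + λ₂y) − (λ₁φ(x) + λ₂φ(y))‖ < δ, ‖φ(xy) − φ(x)φ(y)‖ < δ, and ‖φ(x*) − φ(x)*‖ < δ for all scalars λ₁, λ₂ with |λᵢ| ≤ 1 and all x, y ∈ G, there exists a unital *-homomorphism ψ : C(X) → Mₙ(ℂ) with ‖φ(f) − ψ(f)‖ < ε for all f ∈ F. -/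
open scoped Matrix.Norms.L2Operator

/-- An almost multiplicative, almost linear, almost star-preserving unital map
`C(X) → Mₙ(ℂ)` bounded by `M` is close to a genuine unital *-homomorphism. -/
theorem almost_hom_close_to_hom
    {X : Type*} [MetricSpace X] [CompactSpace X] (n : ℕ) (hn : 1 ≤ n) (M : ℝ) (hM : 0 < M)
    (ε : ℝ) (hε : 0 < ε) (F : Finset C(X, ℂ)) :
    ∃ δ > 0, ∃ G : Finset C(X, ℂ),
      ∀ φ : C(X, ℂ) → Matrix (Fin n) (Fin n) ℂ,
        φ 1 = 1 →
        (∀ f : C(X, ℂ), ‖f‖ ≤ 1 → ‖φ f‖ ≤ M) →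
        (∀ (c₁ c₂ : ℂ), ‖c₁‖ ≤ 1 → ‖c₂‖ ≤ 1 →
          ∀ x ∈ G, ∀ y ∈ G,
            ‖φ (c₁ • x + c₂ • y) - (c₁ • φ x + c₂ • φ y)‖ < δ ∧
            ‖φ (x * y) - φ x * φ y‖ < δ ∧
            ‖φ (star x) - star (φ x)‖ < δ) →
        ∃ ψ : C(X, ℂ) →⋆ₐ[ℂ] Matrix (Fin n) (Fin n) ℂ,
          ∀ f ∈ F, ‖φ f - ψ f‖ < ε := by
  classical
  by_contra hcon
  push_neg at hcon
  -- Select, for each parameter `p = (δ, G)`, a counterexample map `Φ p`.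
  have hsel : ∀ p : ℝ × Finset C(X, ℂ), ∃ φ : C(X, ℂ) → Matrix (Fin n) (Fin n) ℂ,
      0 < p.1 → (φ 1 = 1 ∧ (∀ f : C(X, ℂ), ‖f‖ ≤ 1 → ‖φ f‖ ≤ M) ∧
        (∀ (c₁ c₂ : ℂ), ‖c₁‖ ≤ 1 → ‖c₂‖ ≤ 1 →
          ∀ x ∈ p.2, ∀ y ∈ p.2,
            ‖φ (c₁ • x + c₂ • y) - (c₁ • φ x + c₂ • φ y)‖ < p.1 ∧
            ‖φ (x * y) - φ x * φ y‖ < p.1 ∧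
            ‖φ (star x) - star (φ x)‖ < p.1) ∧
        (∀ ψ : C(X, ℂ) →⋆ₐ[ℂ] Matrix (Fin n) (Fin n) ℂ,
          ∃ f ∈ F, ε ≤ ‖φ f - ψ f‖)) := by
    intro p
    by_cases hp : 0 < p.1
    · obtain ⟨φ, h1, h2, h3, h4⟩ := hcon p.1 hp p.2
      exact ⟨φ, fun _ => ⟨h1, h2, h3, h4⟩⟩
    · exact ⟨fun _ => 1, fun h => absurd h hp⟩
  choose Φ hΦ using hsel
  -- The filter of "δ small, G large".
  set l : Filter (ℝ × Finset C(X, ℂ)) :=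
    (nhdsWithin (0 : ℝ) (Set.Ioi 0)) ×ˢ (Filter.atTop : Filter (Finset C(X, ℂ))) with hl
  haveI hlne : l.NeBot := by
    rw [hl]
    exact Filter.prod_neBot.mpr ⟨nhdsGT_neBot 0, Filter.atTop_neBot⟩
  obtain ⟨𝒰, h𝒰⟩ := Ultrafilter.exists_le l
  have hev_small : ∀ δ₀ : ℝ, 0 < δ₀ → ∀ᶠ p in (𝒰 : Filter (ℝ × Finset C(X, ℂ))),
      0 < p.1 ∧ p.1 < δ₀ := by
    intro δ₀ hδ₀
    apply h𝒰
    rw [hl]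
    have h1 : ∀ᶠ x in nhdsWithin (0 : ℝ) (Set.Ioi 0), 0 < x ∧ x < δ₀ := by
      have ha : ∀ᶠ x in nhdsWithin (0 : ℝ) (Set.Ioi 0), 0 < x := self_mem_nhdsWithin
      have hb : ∀ᶠ x in nhdsWithin (0 : ℝ) (Set.Ioi 0), x < δ₀ :=
        Filter.Eventually.filter_mono nhdsWithin_le_nhds (eventually_lt_nhds hδ₀)
      exact ha.and hb
    exact h1.prod_inl _
  have hev_mem : ∀ g : C(X, ℂ), ∀ᶠ p in (𝒰 : Filter (ℝ × Finset C(X, ℂ))), g ∈ p.2 := by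
    intro g
    apply h𝒰
    rw [hl]
    have h1 : ∀ᶠ G in (Filter.atTop : Filter (Finset C(X, ℂ))), g ∈ G := by
      filter_upwards [Filter.eventually_ge_atTop ({g} : Finset C(X, ℂ))] with G hG
      exact hG (Finset.mem_singleton_self g)
    exact h1.prod_inr _
  haveI : ProperSpace (Matrix (Fin n) (Fin n) ℂ) := FiniteDimensional.proper ℂ _
  -- existence of ultrafilter limits
  have hlim : ∀ g : C(X, ℂ), ∃ a : Matrix (Fin n) (Fin n) ℂ,
      Filter.Tendsto (fun p => Φ p g) (𝒰 : Filter (ℝ × Finset C(X, ℂ))) (nhds a) := by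
    intro g
    set R : ℝ := (M + 1) * max 1 ‖g‖ with hR
    have hbd : ∀ᶠ p in (𝒰 : Filter (ℝ × Finset C(X, ℂ))),
        Φ p g ∈ Metric.closedBall (0 : Matrix (Fin n) (Fin n) ℂ) R := by
      filter_upwards [hev_small 1 one_pos, hev_mem g] with p hp hg
      obtain ⟨h1, hbnd, hcond, _⟩ := hΦ p hp.1
      set c : ℝ := (max 1 ‖g‖)⁻¹ with hc
      have hmaxpos : (0 : ℝ) < max 1 ‖g‖ := lt_of_lt_of_le one_pos (le_max_left _ _)
      have hcpos : 0 < c := inv_pos.mpr hmaxpos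
      have hcle : c ≤ 1 := by
        rw [hc, inv_le_one_iff₀]
        right; exact le_max_left _ _
      have habs : ‖((c : ℂ))‖ ≤ 1 := by
        rw [Complex.norm_real, Real.norm_eq_abs, abs_of_pos hcpos]
        exact hcle
      have hcnd := (hcond (c : ℂ) 0 habs (by simp) g hg g hg).1
      simp only [zero_smul, add_zero] at hcnd
      -- ‖Φ p ((c:ℂ) • g) - (c:ℂ) • Φ p g‖ < p.1 < 1
      have hsmallnorm : ‖(c : ℂ) • g‖ ≤ 1 := by
        rw [norm_smul, Complex.norm_real, Real.norm_eq_abs, abs_of_pos hcpos, hc]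
        rw [inv_mul_le_iff₀ hmaxpos]
        simpa using le_max_right 1 ‖g‖
      have hb1 : ‖Φ p ((c : ℂ) • g)‖ ≤ M := hbnd _ hsmallnorm
      have hb2 : ‖(c : ℂ) • Φ p g‖ ≤ M + 1 := by
        have hrev : ‖(c : ℂ) • Φ p g‖ - ‖Φ p ((c : ℂ) • g)‖ ≤
            ‖Φ p ((c : ℂ) • g) - (c : ℂ) • Φ p g‖ := by
          rw [norm_sub_rev]
          exact norm_sub_norm_le _ _
        linarith [hcnd, hp.2, hb1]
      have hb3 : c * ‖Φ p g‖ ≤ M + 1 := by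
        rwa [norm_smul, Complex.norm_real, Real.norm_eq_abs, abs_of_pos hcpos] at hb2
      have hb4 : ‖Φ p g‖ ≤ R := by
        have hid : ‖Φ p g‖ = (1 ⊔ ‖g‖) * (c * ‖Φ p g‖) := by
          rw [hc, ← mul_assoc, mul_inv_cancel₀ (ne_of_gt hmaxpos), one_mul]
        rw [hR, mul_comm (M + 1), hid]
        exact mul_le_mul_of_nonneg_left hb3 (le_of_lt hmaxpos)
      simpa [Metric.mem_closedBall, dist_eq_norm] using hb4
    have hle : (Ultrafilter.map (fun p => Φ p g) 𝒰 : Filter (Matrix (Fin n) (Fin n) ℂ)) ≤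
        Filter.principal (Metric.closedBall (0 : Matrix (Fin n) (Fin n) ℂ) R) := by
      rw [Filter.le_principal_iff]
      exact Filter.mem_map.mpr hbd
    obtain ⟨a, -, ha⟩ := (isCompact_closedBall (0 : Matrix (Fin n) (Fin n) ℂ) R).ultrafilter_le_nhds
      (Ultrafilter.map (fun p => Φ p g) 𝒰) hle
    exact ⟨a, ha⟩
  choose Ψ hΨ using hlim
  -- helper: functions with norm < δ tend to 0
  have key : ∀ v : ℝ × Finset C(X, ℂ) → Matrix (Fin n) (Fin n) ℂ,
      (∀ᶠ p in (𝒰 : Filter (ℝ × Finset C(X, ℂ))), ‖v p‖ < p.1) →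
      Filter.Tendsto v (𝒰 : Filter (ℝ × Finset C(X, ℂ))) (nhds 0) := by
    intro v hv
    rw [NormedAddCommGroup.tendsto_nhds_zero]
    intro η hη
    filter_upwards [hv, hev_small η hη] with p h1 h2
    exact h1.trans h2.2
  -- additivity
  have hadd : ∀ x y : C(X, ℂ), Ψ (x + y) = Ψ x + Ψ y := by
    intro x y
    have h0 : Filter.Tendsto (fun p => Φ p (x + y) - (Φ p x + Φ p y))
        (𝒰 : Filter (ℝ × Finset C(X, ℂ))) (nhds 0) := by
      apply key
      filter_upwards [hev_small 1 one_pos, hev_mem x, hev_mem y] with p hp hx hy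
      have h := ((hΦ p hp.1).2.2.1 1 1 (by simp) (by simp) x hx y hy).1
      simpa using h
    have h1 : Filter.Tendsto (fun p => (Φ p (x + y) - (Φ p x + Φ p y)) + (Φ p x + Φ p y))
        (𝒰 : Filter (ℝ × Finset C(X, ℂ))) (nhds (0 + (Ψ x + Ψ y))) :=
      h0.add ((hΨ x).add (hΨ y))
    have h2 : Filter.Tendsto (fun p => Φ p (x + y))
        (𝒰 : Filter (ℝ × Finset C(X, ℂ))) (nhds (Ψ x + Ψ y)) := by
      simpa using h1
    exact tendsto_nhds_unique (hΨ (x + y)) h2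
  -- scalar multiplication for small scalars
  have hsmul1 : ∀ (c : ℂ), ‖c‖ ≤ 1 → ∀ x : C(X, ℂ), Ψ (c • x) = c • Ψ x := by
    intro c hc x
    have h0 : Filter.Tendsto (fun p => Φ p (c • x) - c • Φ p x)
        (𝒰 : Filter (ℝ × Finset C(X, ℂ))) (nhds 0) := by
      apply key
      filter_upwards [hev_small 1 one_pos, hev_mem x] with p hp hx
      have h := ((hΦ p hp.1).2.2.1 c 0 hc (by simp) x hx x hx).1
      simpa using h
    have h1 : Filter.Tendsto (fun p => (Φ p (c • x) - c • Φ p x) + c • Φ p x)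
        (𝒰 : Filter (ℝ × Finset C(X, ℂ))) (nhds (0 + c • Ψ x)) :=
      h0.add ((hΨ x).const_smul c)
    have h2 : Filter.Tendsto (fun p => Φ p (c • x))
        (𝒰 : Filter (ℝ × Finset C(X, ℂ))) (nhds (c • Ψ x)) := by
      simpa using h1
    exact tendsto_nhds_unique (hΨ (c • x)) h2
  -- multiplicativity
  have hmul : ∀ x y : C(X, ℂ), Ψ (x * y) = Ψ x * Ψ y := by
    intro x y
    have h0 : Filter.Tendsto (fun p => Φ p (x * y) - Φ p x * Φ p y)
        (𝒰 : Filter (ℝ × Finset C(X, ℂ))) (nhds 0) := by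
      apply key
      filter_upwards [hev_small 1 one_pos, hev_mem x, hev_mem y] with p hp hx hy
      exact ((hΦ p hp.1).2.2.1 1 1 (by simp) (by simp) x hx y hy).2.1
    have h1 : Filter.Tendsto (fun p => (Φ p (x * y) - Φ p x * Φ p y) + Φ p x * Φ p y)
        (𝒰 : Filter (ℝ × Finset C(X, ℂ))) (nhds (0 + Ψ x * Ψ y)) :=
      h0.add ((hΨ x).mul (hΨ y))
    have h2 : Filter.Tendsto (fun p => Φ p (x * y))
        (𝒰 : Filter (ℝ × Finset C(X, ℂ))) (nhds (Ψ x * Ψ y)) := by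
      simpa using h1
    exact tendsto_nhds_unique (hΨ (x * y)) h2
  -- star preservation
  have hstar : ∀ x : C(X, ℂ), Ψ (star x) = star (Ψ x) := by
    intro x
    have h0 : Filter.Tendsto (fun p => Φ p (star x) - star (Φ p x))
        (𝒰 : Filter (ℝ × Finset C(X, ℂ))) (nhds 0) := by
      apply key
      filter_upwards [hev_small 1 one_pos, hev_mem x] with p hp hx
      exact ((hΦ p hp.1).2.2.1 1 1 (by simp) (by simp) x hx x hx).2.2
    have h1 : Filter.Tendsto (fun p => (Φ p (star x) - star (Φ p x)) + star (Φ p x))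
        (𝒰 : Filter (ℝ × Finset C(X, ℂ))) (nhds (0 + star (Ψ x))) :=
      h0.add ((hΨ x).star)
    have h2 : Filter.Tendsto (fun p => Φ p (star x))
        (𝒰 : Filter (ℝ × Finset C(X, ℂ))) (nhds (star (Ψ x))) := by
      simpa using h1
    exact tendsto_nhds_unique (hΨ (star x)) h2
  -- unitality
  have hone : Ψ 1 = 1 := by
    have h2 : Filter.Tendsto (fun p => Φ p (1 : C(X, ℂ)))
        (𝒰 : Filter (ℝ × Finset C(X, ℂ))) (nhds 1) := by
      apply Filter.Tendsto.congr' _ tendsto_const_nhds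
      filter_upwards [hev_small 1 one_pos] with p hp
      exact ((hΦ p hp.1).1).symm
    exact tendsto_nhds_unique (hΨ 1) h2
  have hzero : Ψ 0 = 0 := by
    have := hadd 0 0
    rw [add_zero] at this
    have h := this
    -- Ψ 0 = Ψ 0 + Ψ 0
    have : Ψ 0 - Ψ 0 = Ψ 0 + Ψ 0 - Ψ 0 := by rw [← h]
    simpa using this.symm
  -- natural number scalars
  have hnsmul : ∀ (m : ℕ) (x : C(X, ℂ)), Ψ ((m : ℂ) • x) = (m : ℂ) • Ψ x := by
    intro m
    induction m with
    | zero => intro x; simpa using hzero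
    | succ k ih =>
      intro x
      have : ((k + 1 : ℕ) : ℂ) • x = (k : ℂ) • x + x := by
        push_cast
        rw [add_smul, one_smul]
      rw [this, hadd, ih]
      push_cast
      rw [add_smul, one_smul]
  -- full complex homogeneity
  have hsmul : ∀ (c : ℂ) (x : C(X, ℂ)), Ψ (c • x) = c • Ψ x := by
    intro c x
    set m : ℕ := ⌈‖c‖⌉₊ + 1 with hm
    have hmpos : (0 : ℝ) < (m : ℝ) := by positivity
    have habs : ‖c / (m : ℂ)‖ ≤ 1 := by
      rw [norm_div]
      rw [div_le_one (by simpa using hmpos)]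
      have h1 : ‖c‖ ≤ (⌈‖c‖⌉₊ : ℝ) := Nat.le_ceil _
      have h2 : ((⌈‖c‖⌉₊ : ℝ)) ≤ (m : ℝ) := by
        rw [hm]; push_cast; linarith
      calc ‖c‖ ≤ (⌈‖c‖⌉₊ : ℝ) := h1
        _ ≤ (m : ℝ) := h2
        _ = ‖((m : ℂ))‖ := by
            rw [Complex.norm_natCast]
    have hmne : ((m : ℂ)) ≠ 0 := by
      have : m ≠ 0 := by omega
      exact_mod_cast this
    have hdecomp : c • x = (c / (m : ℂ)) • ((m : ℂ) • x) := by
      rw [smul_smul, div_mul_cancel₀ _ hmne]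
    rw [hdecomp, hsmul1 _ habs, hnsmul, smul_smul, div_mul_cancel₀ _ hmne]
  -- build the star algebra homomorphism
  let ψ : C(X, ℂ) →⋆ₐ[ℂ] Matrix (Fin n) (Fin n) ℂ :=
    { toFun := Ψ
      map_one' := hone
      map_mul' := hmul
      map_zero' := hzero
      map_add' := hadd
      commutes' := by
        intro c
        have h1 : (algebraMap ℂ C(X, ℂ)) c = c • (1 : C(X, ℂ)) :=
          Algebra.algebraMap_eq_smul_one c
        have h2 : (algebraMap ℂ (Matrix (Fin n) (Fin n) ℂ)) c =
            c • (1 : Matrix (Fin n) (Fin n) ℂ) := Algebra.algebraMap_eq_smul_one c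
        show Ψ ((algebraMap ℂ C(X, ℂ)) c) = (algebraMap ℂ (Matrix (Fin n) (Fin n) ℂ)) c
        rw [h1, h2, hsmul, hone]
      map_star' := hstar }
  -- derive the contradiction
  have hfar : ∀ᶠ p in (𝒰 : Filter (ℝ × Finset C(X, ℂ))), ∃ f ∈ F, ε ≤ ‖Φ p f - Ψ f‖ := by
    filter_upwards [hev_small 1 one_pos] with p hp
    obtain ⟨f, hf, h⟩ := (hΦ p hp.1).2.2.2 ψ
    exact ⟨f, hf, h⟩
  have hclose : ∀ᶠ p in (𝒰 : Filter (ℝ × Finset C(X, ℂ))), ∀ f ∈ F, ‖Φ p f - Ψ f‖ < ε := by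
    rw [Filter.eventually_all_finset]
    intro f _
    have h1 := Metric.tendsto_nhds.mp (hΨ f) ε hε
    filter_upwards [h1] with p hp
    rwa [dist_eq_norm] at hp
  obtain ⟨p, h1, h2⟩ := (hfar.and hclose).exists
  obtain ⟨f, hf, h⟩ := h1
  exact absurd (h2 f hf) (not_lt.mpr h)
end
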